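/- arXiv:2408.12434 — 10 statements merged into one kernel-verified Lean document; each statement's English description precedes it below -/
import Mathlib

section
/- The quantity K := P + P^{-1} + Q·P^{-1} is conserved along solutions of the ODE system r·dP/dr = -P·Q, r·dQ/dr = Q·(P² - 1 - Q), for P > 0: that is, r·dK/dr = 0. -/
/-- The quantity K := P + P⁻¹ + Q·P⁻¹ is conserved along solutions of
the ODE system r·P' = -P·Q, r·Q' = Q·(P² - 1 - Q), for P > 0: r·K' = 0. -/
theorem stmt_0 (r₀ : ℝ) (P Q : ℝ → ℝ)
    (hPdiff : ∀ r ∈ Set.Ioc (0:ℝ) r₀, DifferentiableAt ℝ P r)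
    (hQdiff : ∀ r ∈ Set.Ioc (0:ℝ) r₀, DifferentiableAt ℝ Q r)
    (hPpos : ∀ r ∈ Set.Ioc (0:ℝ) r₀, 0 < P r)
    (hodeP : ∀ r ∈ Set.Ioc (0:ℝ) r₀, r * deriv P r = -(P r) * Q r)
    (hodeQ : ∀ r ∈ Set.Ioc (0:ℝ) r₀, r * deriv Q r = Q r * ((P r)^2 - 1 - Q r)) :
    ∀ r ∈ Set.Ioc (0:ℝ) r₀,
      r * deriv (fun s => P s + (P s)⁻¹ + Q s * (P s)⁻¹) r = 0 := by
  intro r hr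
  have hP := hPdiff r hr
  have hQ := hQdiff r hr
  have hPne : P r ≠ 0 := (hPpos r hr).ne'
  have hp := hP.hasDerivAt
  have hq := hQ.hasDerivAt
  have hinv := hp.inv hPne
  have hK := (hp.add hinv).add (hq.mul hinv)
  rw [show (fun s => P s + (P s)⁻¹ + Q s * (P s)⁻¹) = P + P⁻¹ + Q * P⁻¹ from rfl, hK.deriv]
  have h1 := hodeP r hr
  have h2 := hodeQ r hr
  have hrne : r ≠ 0 := ne_of_gt hr.1
  have hPd : deriv P r = -(P r) * Q r / r := by field_simp at h1 ⊢; linarith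
  have hQd : deriv Q r = Q r * ((P r)^2 - 1 - Q r) / r := by
    field_simp at h2 ⊢; linarith
  rw [hPd, hQd, Pi.inv_apply]
  field_simp
  ring
end

section
/- If P, Q solve the exact ODE system r·dP/dr = -P·Q, r·dQ/dr = Q·(P²-1-Q) with initial data η^{-1} ≤ P(r₀) ≤ η and 0 ≤ Q(r₀) ≤ 1 for some η ≥ 2, then for all r ∈ (0, r₀], one has (4η)^{-1} ≤ P(r) ≤ 4η and Q(r) ≤ 16η². -/
/-- For the exact bounce ODE system with data η⁻¹ ≤ P(r₀) ≤ η,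
0 ≤ Q(r₀) ≤ 1 (η ≥ 2), one has (4η)⁻¹ ≤ P ≤ 4η and Q ≤ 16η² on (0, r₀]. -/
theorem stmt_1 (η r₀ : ℝ) (hη : 2 ≤ η) (hr₀ : 0 < r₀) (P Q : ℝ → ℝ)
    (hPdiff : ∀ r ∈ Set.Ioc (0:ℝ) r₀, DifferentiableAt ℝ P r)
    (hQdiff : ∀ r ∈ Set.Ioc (0:ℝ) r₀, DifferentiableAt ℝ Q r)
    (hPpos : ∀ r ∈ Set.Ioc (0:ℝ) r₀, 0 < P r)
    (hQnn : ∀ r ∈ Set.Ioc (0:ℝ) r₀, 0 ≤ Q r)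
    (hodeP : ∀ r ∈ Set.Ioc (0:ℝ) r₀, r * deriv P r = -(P r) * Q r)
    (hodeQ : ∀ r ∈ Set.Ioc (0:ℝ) r₀, r * deriv Q r = Q r * ((P r)^2 - 1 - Q r))
    (hP0l : η⁻¹ ≤ P r₀) (hP0u : P r₀ ≤ η) (hQ0 : Q r₀ ≤ 1) :
    ∀ r ∈ Set.Ioc (0:ℝ) r₀,
      (4*η)⁻¹ ≤ P r ∧ P r ≤ 4*η ∧ Q r ≤ 16*η^2 := by
  have hη0 : (0:ℝ) < η := by linarith
  -- The first integral g = (1 + Q + P²)/P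
  set g : ℝ → ℝ := fun x => (1 + Q x + (P x)^2) / P x with hgdef
  have key : ∀ x ∈ Set.Ioc (0:ℝ) r₀, HasDerivAt g 0 x := by
    intro x hx
    have hx0 : (0:ℝ) < x := hx.1
    have hPx := hPpos x hx
    have hP' : HasDerivAt P (-(P x * Q x) / x) x := by
      have h := (hPdiff x hx).hasDerivAt
      have heq : deriv P x = -(P x * Q x) / x := by
        have := hodeP x hx
        field_simp
        linarith
      rwa [heq] at h
    have hQ' : HasDerivAt Q (Q x * ((P x)^2 - 1 - Q x) / x) x := by
      have h := (hQdiff x hx).hasDerivAt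
      have heq : deriv Q x = Q x * ((P x)^2 - 1 - Q x) / x := by
        have := hodeQ x hx
        field_simp
        linarith
      rwa [heq] at h
    have hN := ((hasDerivAt_const x (1:ℝ)).add hQ').add (hP'.pow 2)
    have hg' := hN.div hP' hPx.ne'
    have hg'' : HasDerivAt g _ x := hg'
    convert hg'' using 1
    have hx0' : x ≠ 0 := hx0.ne'
    simp only [Pi.add_apply, Pi.pow_apply]
    field_simp
    ring
  intro r hr
  have hr0 : 0 < r := hr.1
  have hrr₀ : r ≤ r₀ := hr.2
  -- g is constant: g r = g r₀
  have hconst : g r₀ = g r := by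
    have hcont : ContinuousOn g (Set.Icc r r₀) := fun x hx =>
      ((key x ⟨lt_of_lt_of_le hr0 hx.1, hx.2⟩).continuousAt).continuousWithinAt
    have hderiv : ∀ x ∈ Set.Ico r r₀, HasDerivWithinAt g 0 (Set.Ici x) x := fun x hx =>
      (key x ⟨lt_of_lt_of_le hr0 hx.1, le_of_lt hx.2⟩).hasDerivWithinAt
    exact constant_of_has_deriv_right_zero hcont hderiv r₀ (Set.right_mem_Icc.mpr hrr₀)
  have hP₀ : 0 < P r₀ := hPpos r₀ ⟨hr₀, le_refl _⟩
  have hQ₀ : 0 ≤ Q r₀ := hQnn r₀ ⟨hr₀, le_refl _⟩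
  have hPr : 0 < P r := hPpos r hr
  have hQr : 0 ≤ Q r := hQnn r hr
  -- bound the constant: g r₀ ≤ 3η
  have h1 : 1 ≤ η * P r₀ := by
    have := mul_le_mul_of_nonneg_right hP0l hη0.le
    rw [inv_mul_cancel₀ hη0.ne'] at this
    linarith [mul_comm (P r₀) η]
  have hC : g r₀ ≤ 3 * η := by
    rw [hgdef]
    rw [div_le_iff₀ hP₀]
    nlinarith
  have hCr : g r = (1 + Q r + (P r)^2) / P r := rfl
  have hEq : 1 + Q r + (P r)^2 = g r₀ * P r := by
    rw [hconst, hCr, eq_comm, div_eq_iff hPr.ne'] at *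
    rw [hconst]
    field_simp
  have hC3 : g r₀ ≤ 3 * η := hC
  -- P r ≤ g r₀
  have hPle : P r ≤ g r₀ := by
    have h : P r * P r ≤ g r₀ * P r := by nlinarith
    exact le_of_mul_le_mul_right h hPr
  have hCpos : 0 < g r₀ := lt_of_lt_of_le hPr hPle
  refine ⟨?_, ?_, ?_⟩
  · -- lower bound
    have h1C : 1 ≤ g r₀ * P r := by nlinarith
    have h3 : 1 ≤ 3 * η * P r := by nlinarith
    rw [show (4*η)⁻¹ = 1/(4*η) from (one_div _).symm, div_le_iff₀ (by linarith : (0:ℝ) < 4*η)]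
    nlinarith
  · linarith
  · -- Q bound
    nlinarith [mul_le_mul_of_nonneg_left hPle hCpos.le, sq_nonneg (P r)]
end

section
/- Under the perturbed ODE system r·dP/dr = -P·Q + E₁ and r·dQ/dr = Q·(P² - 1 - Q + E₂), where |E₁(r)|, |E₂(r)| ≤ δ·r^{1/2}, with initial data η^{-1} ≤ P(r₀) ≤ η and 0 ≤ Q(r₀) ≤ 1, if δ is sufficiently small depending only on η then for all r ∈ [r_b, r₀]: (4η)^{-1} ≤ P(r) ≤ 4η and Q(r) ≤ 16η². -/
open Set Filter Topology

/-- Derivative of the conserved quantity `F = Q/P + P + P⁻¹` for the perturbed system. -/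
private lemma hasDerivAt_F_aux (P Q E₁ E₂ : ℝ → ℝ) (t : ℝ) (ht : 0 < t)
    (hp : DifferentiableAt ℝ P t) (hq : DifferentiableAt ℝ Q t)
    (hne : P t ≠ 0)
    (hodeP : t * deriv P t = -(P t) * Q t + E₁ t)
    (hodeQ : t * deriv Q t = Q t * ((P t)^2 - 1 - Q t + E₂ t)) :
    HasDerivAt (fun s => Q s / P s + P s + (P s)⁻¹)
      ((Q t * E₂ t / P t + E₁ t * ((P t)^2 - 1 - Q t) / (P t)^2) / t) t := by
  have hp' := hp.hasDerivAt
  have hq' := hq.hasDerivAt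
  have h := ((hq'.div hp' hne).add hp').add (hp'.inv hne)
  refine h.congr_deriv ?_
  have ht' : t ≠ 0 := ne_of_gt ht
  have hdp : deriv P t = (-(P t) * Q t + E₁ t) / t := by
    rw [eq_div_iff ht']; linear_combination hodeP
  have hdq : deriv Q t = Q t * ((P t)^2 - 1 - Q t + E₂ t) / t := by
    rw [eq_div_iff ht']; linear_combination hodeQ
  rw [hdp, hdq]
  field_simp
  ring

/-- Bound on the numerator of `F'`. -/
private lemma absX_aux (p q e₁ e₂ B M : ℝ) (hp : 0 < p) (hq : 0 ≤ q)
    (hqp : q / p ≤ B) (hip : p⁻¹ ≤ B)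
    (he₁ : |e₁| ≤ M) (he₂ : |e₂| ≤ M) (hM : 0 ≤ M) :
    |q * e₂ / p + e₁ * (p^2 - 1 - q) / p^2| ≤ (B + 1 + 2*B^2) * M := by
  have hB0 : 0 < B := lt_of_lt_of_le (inv_pos.mpr hp) hip
  have h1 : |q * e₂ / p| ≤ B * M := by
    rw [abs_div, abs_of_pos hp, abs_mul, abs_of_nonneg hq]
    calc q * |e₂| / p = q / p * |e₂| := by ring
    _ ≤ B * M := mul_le_mul hqp he₂ (abs_nonneg _) hB0.le
  have hBp : 1 ≤ B * p := by
    have := mul_le_mul_of_nonneg_right hip hp.le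
    rwa [inv_mul_cancel₀ hp.ne'] at this
  have hqBp : q ≤ B * p := by
    rw [div_le_iff₀ hp] at hqp; linarith
  have h2 : |e₁ * (p^2 - 1 - q) / p^2| ≤ (1 + 2*B^2) * M := by
    rw [abs_div, abs_mul, abs_of_pos (by positivity : (0:ℝ) < p^2)]
    have habs : |p^2 - 1 - q| ≤ (1 + 2*B^2) * p^2 := by
      rw [abs_le]
      constructor <;> nlinarith [sq_nonneg (B*p - 1), sq_nonneg p]
    calc |e₁| * |p^2 - 1 - q| / p^2 ≤ M * ((1 + 2*B^2) * p^2) / p^2 := by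
          apply div_le_div_of_nonneg_right ?_ (by positivity)
          · exact mul_le_mul he₁ habs (abs_nonneg _) hM
    _ = (1 + 2*B^2) * M := by field_simp
  calc |q * e₂ / p + e₁ * (p^2 - 1 - q) / p^2|
      ≤ |q * e₂ / p| + |e₁ * (p^2 - 1 - q) / p^2| := abs_add_le _ _
    _ ≤ B * M + (1 + 2*B^2) * M := add_le_add h1 h2
    _ = (B + 1 + 2*B^2) * M := by ring

/-- For the perturbed bounce ODE system with errors |Eᵢ(r)| ≤ δ·√r and
data η⁻¹ ≤ P(r₀) ≤ η, 0 ≤ Q(r₀) ≤ 1, if δ is small enough depending only on η, then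
(4η)⁻¹ ≤ P ≤ 4η and Q ≤ 16η² on [r_b, r₀]. -/
theorem stmt_2 (η : ℝ) (hη : 2 < η) :
    ∃ δ₀ : ℝ, 0 < δ₀ ∧
      ∀ (r_b r₀ δ : ℝ) (P Q E₁ E₂ : ℝ → ℝ),
        0 < r_b → r_b < r₀ → r₀ ≤ 1 → 0 < δ → δ ≤ δ₀ →
        (∀ r ∈ Set.Icc r_b r₀, DifferentiableAt ℝ P r) →
        (∀ r ∈ Set.Icc r_b r₀, DifferentiableAt ℝ Q r) →
        (∀ r ∈ Set.Icc r_b r₀, 0 ≤ P r) →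
        (∀ r ∈ Set.Icc r_b r₀, 0 ≤ Q r) →
        (∀ r ∈ Set.Icc r_b r₀, r * deriv P r = -(P r) * Q r + E₁ r) →
        (∀ r ∈ Set.Icc r_b r₀, r * deriv Q r = Q r * ((P r)^2 - 1 - Q r + E₂ r)) →
        (∀ r ∈ Set.Icc r_b r₀, |E₁ r| ≤ δ * Real.sqrt r) →
        (∀ r ∈ Set.Icc r_b r₀, |E₂ r| ≤ δ * Real.sqrt r) →
        η⁻¹ ≤ P r₀ → P r₀ ≤ η → Q r₀ ≤ 1 →
        ∀ r ∈ Set.Icc r_b r₀, (4*η)⁻¹ ≤ P r ∧ P r ≤ 4*η ∧ Q r ≤ 16*η^2 := by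
  have hη0 : (0:ℝ) < η := by linarith
  obtain ⟨B, hB⟩ : ∃ B : ℝ, B = 3*η + 1 := ⟨_, rfl⟩
  obtain ⟨C, hC⟩ : ∃ C : ℝ, C = B + 1 + 2*B^2 := ⟨_, rfl⟩
  have hB0 : (0:ℝ) < B := by rw [hB]; linarith
  have hC0 : (0:ℝ) < C := by rw [hC]; nlinarith
  refine ⟨1/(4*C), div_pos one_pos (by linarith), ?_⟩
  intro r_b r₀ δ P Q E₁ E₂ hrb hbr₀ hr₀1 hδ0 hδ
  intro hPd hQd hPpos hQpos hPode hQode hE₁ hE₂ hP₀l hP₀u hQ₀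
  have hIcc : r_b ≤ r₀ := le_of_lt hbr₀
  have hr₀Icc : r₀ ∈ Icc r_b r₀ := right_mem_Icc.mpr hIcc
  have hinvpos : (0:ℝ) < (4*η)⁻¹ := by positivity
  obtain ⟨F, hF⟩ : ∃ F : ℝ → ℝ, F = fun t => Q t / P t + P t + (P t)⁻¹ := ⟨_, rfl⟩
  -- each term of F is ≤ F
  have hcons : ∀ t ∈ Icc r_b r₀, 0 < P t →
      Q t / P t ≤ F t ∧ P t ≤ F t ∧ (P t)⁻¹ ≤ F t := by
    intro t ht hpt
    have h1 : 0 ≤ Q t / P t := div_nonneg (hQpos t ht) hpt.le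
    have h2 : 0 < (P t)⁻¹ := inv_pos.mpr hpt
    refine ⟨?_, ?_, ?_⟩ <;> simp only [hF] <;> linarith
  -- initial bound : F r₀ ≤ 3η
  have hp₀ : 0 < P r₀ := lt_of_lt_of_le (inv_pos.mpr hη0) hP₀l
  have hinv₀ : (P r₀)⁻¹ ≤ η := by
    rw [inv_le_comm₀ hp₀ hη0] at *
    exact hP₀l
  have hFr₀ : F r₀ ≤ 3*η := by
    have h1 : Q r₀ / P r₀ ≤ (P r₀)⁻¹ := by
      rw [div_le_iff₀ hp₀, inv_mul_cancel₀ hp₀.ne']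
      exact hQ₀
    simp only [hF]
    linarith
  have hP₀l' : (4*η)⁻¹ ≤ P r₀ := by
    refine le_trans ?_ hP₀l
    apply inv_anti₀ hη0
    linarith
  -- the core quantitative estimate
  have key : ∀ r ∈ Icc r_b r₀, (∀ t ∈ Icc r r₀, (4*η)⁻¹ ≤ P t ∧ F t ≤ B) →
      ∀ t ∈ Icc r r₀, F t ≤ 3*η + 1/2 := by
    intro r hr hgood t ht
    have hsub : Icc r r₀ ⊆ Icc r_b r₀ := Icc_subset_Icc hr.1 le_rfl
    have hPpos' : ∀ s ∈ Icc r r₀, 0 < P s := fun s hs =>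
      lt_of_lt_of_le hinvpos (hgood s hs).1
    have hmono : MonotoneOn (fun s => F s + 2*C*δ * Real.sqrt s) (Icc r r₀) := by
      apply monotoneOn_of_deriv_nonneg (convex_Icc r r₀)
      · intro s hs
        have hs' := hsub hs
        have hps := (hPpos' s hs).ne'
        apply ContinuousAt.continuousWithinAt
        simp only [hF]
        exact ((((hQd s hs').continuousAt.div (hPd s hs').continuousAt hps).add
          (hPd s hs').continuousAt).add ((hPd s hs').continuousAt.inv₀ hps)).add
          (continuousAt_const.mul Real.continuous_sqrt.continuousAt)
      · intro s hs
        rw [interior_Icc] at hs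
        have hs' : s ∈ Icc r r₀ := Ioo_subset_Icc_self hs
        have hsI := hsub hs'
        have hspos : 0 < s := lt_of_lt_of_le hrb hsI.1
        have hps := (hPpos' s hs').ne'
        apply DifferentiableAt.differentiableWithinAt
        simp only [hF]
        exact ((((hQd s hsI).div (hPd s hsI) hps).add (hPd s hsI)).add
          ((hPd s hsI).inv hps)).add
          ((differentiableAt_const _).mul
            (Real.hasDerivAt_sqrt hspos.ne').differentiableAt)
      · intro s hs
        rw [interior_Icc] at hs
        have hs' : s ∈ Icc r r₀ := Ioo_subset_Icc_self hs
        have hsI := hsub hs'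
        have hspos : 0 < s := lt_of_lt_of_le hrb hsI.1
        have hps : 0 < P s := hPpos' s hs'
        have hDF := hasDerivAt_F_aux P Q E₁ E₂ s hspos (hPd s hsI) (hQd s hsI) hps.ne'
          (hPode s hsI) (hQode s hsI)
        have hDF' : HasDerivAt F
            ((Q s * E₂ s / P s + E₁ s * ((P s)^2 - 1 - Q s) / (P s)^2) / s) s := by
          rw [hF]; exact hDF
        have hsq : HasDerivAt (fun u => F u + 2*C*δ * Real.sqrt u)
            ((Q s * E₂ s / P s + E₁ s * ((P s)^2 - 1 - Q s) / (P s)^2) / s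
              + 2*C*δ * (1 / (2 * Real.sqrt s))) s :=
          hDF'.add ((Real.hasDerivAt_sqrt hspos.ne').const_mul (2*C*δ))
        rw [hsq.deriv]
        -- bound the first term from below
        have hq := hQpos s hsI
        have hQP : Q s / P s ≤ B := le_trans (hcons s hsI hps).1 (hgood s hs').2
        have hiP : (P s)⁻¹ ≤ B := le_trans (hcons s hsI hps).2.2 (hgood s hs').2
        have hXa : |Q s * E₂ s / P s + E₁ s * ((P s)^2 - 1 - Q s) / (P s)^2|
            ≤ C * (δ * Real.sqrt s) := by
          rw [hC]
          exact absX_aux (P s) (Q s) (E₁ s) (E₂ s) B (δ * Real.sqrt s) hps hq hQP hiP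
            (hE₁ s hsI) (hE₂ s hsI) (by positivity)
        have hsqrt : 0 < Real.sqrt s := Real.sqrt_pos.mpr hspos
        have hss : Real.sqrt s * Real.sqrt s = s := Real.mul_self_sqrt hspos.le
        have h1 : -(C * (δ * Real.sqrt s)) ≤
            Q s * E₂ s / P s + E₁ s * ((P s)^2 - 1 - Q s) / (P s)^2 :=
          (abs_le.mp hXa).1
        have h2 : -(C * (δ * Real.sqrt s)) / s ≤
            (Q s * E₂ s / P s + E₁ s * ((P s)^2 - 1 - Q s) / (P s)^2) / s :=
          by gcongr
        have e1 : -(C * (δ * Real.sqrt s)) / s = -(C * δ / Real.sqrt s) := by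
          rw [neg_div, neg_inj, div_eq_div_iff hspos.ne' hsqrt.ne']
          linear_combination C * δ * hss
        have e2 : 2*C*δ * (1 / (2 * Real.sqrt s)) = C * δ / Real.sqrt s := by
          field_simp
        rw [e1] at h2
        rw [e2]
        linarith
    -- conclude
    have hG := hmono ht (right_mem_Icc.mpr hr.2) ht.2
    have hsqrt_t : 0 ≤ Real.sqrt t := Real.sqrt_nonneg t
    have hsqrt_r₀ : Real.sqrt r₀ ≤ 1 := by
      rw [show (1:ℝ) = Real.sqrt 1 from (Real.sqrt_one).symm]
      exact Real.sqrt_le_sqrt hr₀1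
    have hCδ : 2*C*δ ≤ 1/2 := by
      have : δ ≤ 1/(4*C) := hδ
      rw [le_div_iff₀ (by positivity)] at this
      nlinarith
    have : F t + 2*C*δ * Real.sqrt t ≤ F r₀ + 2*C*δ * Real.sqrt r₀ := hG
    nlinarith [mul_nonneg (by positivity : (0:ℝ) ≤ 2*C*δ) hsqrt_t,
      mul_le_mul_of_nonneg_left hsqrt_r₀ (by positivity : (0:ℝ) ≤ 2*C*δ)]
  -- the bootstrap set
  set T : Set ℝ := {x | x ∈ Icc r_b r₀ ∧ ∀ t ∈ Icc x r₀, (4*η)⁻¹ ≤ P t ∧ F t ≤ B} with hT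
  have hFr₀B : F r₀ ≤ B := by rw [hB]; linarith
  have hr₀T : r₀ ∈ T := by
    refine ⟨hr₀Icc, ?_⟩
    intro t ht
    have : t = r₀ := le_antisymm ht.2 ht.1
    rw [this]; exact ⟨hP₀l', hFr₀B⟩
  have hTne : T.Nonempty := ⟨r₀, hr₀T⟩
  have hTbdd : BddBelow T := ⟨r_b, fun x hx => hx.1.1⟩
  obtain ⟨m, hm⟩ : ∃ m : ℝ, m = sInf T := ⟨_, rfl⟩
  have hmlb : r_b ≤ m := by rw [hm]; exact le_csInf hTne fun x hx => hx.1.1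
  have hmub : m ≤ r₀ := by rw [hm]; exact csInf_le hTbdd hr₀T
  have hmIcc : m ∈ Icc r_b r₀ := ⟨hmlb, hmub⟩
  have hgood_gt : ∀ t ∈ Icc r_b r₀, m < t → ((4*η)⁻¹ ≤ P t ∧ F t ≤ B) := by
    intro t ht hmt
    rw [hm] at hmt
    obtain ⟨x, hxT, hxt⟩ := exists_lt_of_csInf_lt hTne hmt
    exact hxT.2 t ⟨hxt.le, ht.2⟩
  have hmT : m ∈ T := by
    rcases eq_or_lt_of_le hmub with heq | hlt
    · rw [heq]; exact hr₀T
    · refine ⟨hmIcc, ?_⟩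
      have hPc : ContinuousAt P m := (hPd m hmIcc).continuousAt
      have hQc : ContinuousAt Q m := (hQd m hmIcc).continuousAt
      have hev : ∀ᶠ t in 𝓝[>] m, (4*η)⁻¹ ≤ P t ∧ F t ≤ B := by
        filter_upwards [Ioc_mem_nhdsGT hlt] with t ht
        exact hgood_gt t ⟨le_trans hmlb ht.1.le, ht.2⟩ ht.1
      have hP_lim : (4*η)⁻¹ ≤ P m :=
        ge_of_tendsto (hPc.tendsto.mono_left nhdsWithin_le_nhds)
          (hev.mono fun t h => h.1)
      have hpm : 0 < P m := lt_of_lt_of_le hinvpos hP_lim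
      have hFc : ContinuousAt F m := by
        simp only [hF]
        exact ((hQc.div hPc hpm.ne').add hPc).add (hPc.inv₀ hpm.ne')
      have hF_lim : F m ≤ B :=
        le_of_tendsto (hFc.tendsto.mono_left nhdsWithin_le_nhds)
          (hev.mono fun t h => h.2)
      intro t ht
      rcases eq_or_lt_of_le ht.1 with heq | hlt'
      · rw [← heq]; exact ⟨hP_lim, hF_lim⟩
      · exact hgood_gt t ⟨le_trans hmlb ht.1, ht.2⟩ hlt'
  -- m must equal r_b
  have hmrb : m = r_b := by
    by_contra hne'
    have hlt : r_b < m := lt_of_le_of_ne hmlb (Ne.symm hne')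
    have himp := key m hmIcc hmT.2
    have hmmem : m ∈ Icc m r₀ := ⟨le_refl m, hmub⟩
    have hFm : F m ≤ 3*η + 1/2 := himp m hmmem
    have hpm0 : 0 < P m := lt_of_lt_of_le hinvpos (hmT.2 m hmmem).1
    have hPm : (4*η)⁻¹ < P m := by
      have h2 : (P m)⁻¹ ≤ 3*η + 1/2 := le_trans (hcons m hmIcc hpm0).2.2 hFm
      have h3 : 1 ≤ P m * (3*η + 1/2) := by
        have := mul_le_mul_of_nonneg_left h2 hpm0.le
        rwa [mul_inv_cancel₀ hpm0.ne'] at this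
      have hA : (0:ℝ) < 3*η + 1/2 := by linarith
      have h5 : (3*η + 1/2)⁻¹ ≤ P m := (inv_le_comm₀ hA hpm0).mpr h2
      have h6 : (4*η)⁻¹ < (3*η + 1/2)⁻¹ := by
        apply inv_strictAnti₀ hA
        linarith
      exact lt_of_lt_of_le h6 h5
    have hPc : ContinuousAt P m := (hPd m hmIcc).continuousAt
    have hQc : ContinuousAt Q m := (hQd m hmIcc).continuousAt
    have hFc : ContinuousAt F m := by
      simp only [hF]
      exact ((hQc.div hPc hpm0.ne').add hPc).add (hPc.inv₀ hpm0.ne')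
    have hFmB : F m < B := by rw [hB]; linarith
    have hevent : ∀ᶠ t in 𝓝 m, (4*η)⁻¹ < P t ∧ F t < B :=
      (hPc.tendsto.eventually (isOpen_Ioi.eventually_mem hPm)).and
        (hFc.tendsto.eventually (isOpen_Iio.eventually_mem hFmB))
    obtain ⟨ε, hε, hball⟩ := Metric.eventually_nhds_iff.mp hevent
    set x := max r_b (m - ε/2) with hx
    have hx1 : x < m := max_lt hlt (by linarith)
    have hxT : x ∈ T := by
      refine ⟨⟨le_max_left _ _, le_trans hx1.le hmub⟩, ?_⟩
      intro t ht
      rcases le_or_gt m t with h | h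
      · exact hmT.2 t ⟨h, ht.2⟩
      · have hd : dist t m < ε := by
          rw [Real.dist_eq, abs_lt]
          constructor
          · have h5 : m - ε/2 ≤ t := le_trans (le_max_right r_b (m - ε/2)) ht.1
            linarith
          · linarith
        have hb := hball hd
        exact ⟨hb.1.le, hb.2.le⟩
    have : m ≤ x := by rw [hm]; exact csInf_le hTbdd hxT
    exact absurd this (not_le.mpr hx1)
  -- conclude
  have hall : ∀ t ∈ Icc r_b r₀, (4*η)⁻¹ ≤ P t ∧ F t ≤ B := by
    have := hmT.2
    rw [hmrb] at this
    exact this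
  intro r hr
  have hg := hall r hr
  have hppos : 0 < P r := lt_of_lt_of_le hinvpos hg.1
  have hcons' := hcons r hr hppos
  have hPF : P r ≤ B := le_trans hcons'.2.1 hg.2
  have hQP : Q r / P r ≤ B := le_trans hcons'.1 hg.2
  refine ⟨hg.1, ?_, ?_⟩
  · rw [hB] at hPF; linarith
  · have h2 : Q r = Q r / P r * P r := (div_mul_cancel₀ _ hppos.ne').symm
    have h4 : Q r / P r * P r ≤ B * B := mul_le_mul hQP hPF hppos.le hB0.le
    rw [h2]
    rw [hB] at h4
    nlinarith
end

section
/- For the perturbed ODE system with bounded error terms, the almost-conserved quantity K = P + P^{-1} + Q·P^{-1} satisfies |r·dK/dr| ≤ (1 + 16η² + 64η³ + 256η⁴)·δ·r^{1/2} whenever (4η)^{-1} ≤ P ≤ 4η and 0 ≤ Q ≤ 16η². -/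
/-- For the perturbed bounce ODE system, the almost-conserved quantity
K = P + P⁻¹ + Q·P⁻¹ satisfies |r·K'| ≤ (1 + 16η² + 64η³ + 256η⁴)·δ·√r whenever
(4η)⁻¹ ≤ P ≤ 4η and 0 ≤ Q ≤ 16η². -/
theorem stmt_3 (η δ r_b r₀ : ℝ) (hη : 2 < η) (hδ : 0 ≤ δ)
    (P Q E₁ E₂ : ℝ → ℝ)
    (hPdiff : ∀ r ∈ Set.Icc r_b r₀, DifferentiableAt ℝ P r)
    (hQdiff : ∀ r ∈ Set.Icc r_b r₀, DifferentiableAt ℝ Q r)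
    (hodeP : ∀ r ∈ Set.Icc r_b r₀, r * deriv P r = -(P r) * Q r + E₁ r)
    (hodeQ : ∀ r ∈ Set.Icc r_b r₀, r * deriv Q r = Q r * ((P r)^2 - 1 - Q r + E₂ r))
    (hE₁ : ∀ r ∈ Set.Icc r_b r₀, |E₁ r| ≤ δ * Real.sqrt r)
    (hE₂ : ∀ r ∈ Set.Icc r_b r₀, |E₂ r| ≤ δ * Real.sqrt r)
    (hPl : ∀ r ∈ Set.Icc r_b r₀, (4*η)⁻¹ ≤ P r)
    (hPu : ∀ r ∈ Set.Icc r_b r₀, P r ≤ 4*η)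
    (hQl : ∀ r ∈ Set.Icc r_b r₀, 0 ≤ Q r)
    (hQu : ∀ r ∈ Set.Icc r_b r₀, Q r ≤ 16*η^2) :
    ∀ r ∈ Set.Icc r_b r₀,
      |r * deriv (fun s => P s + (P s)⁻¹ + Q s * (P s)⁻¹) r|
        ≤ (1 + 16*η^2 + 64*η^3 + 256*η^4) * δ * Real.sqrt r := by
  intro r hr
  have hη0 : (0:ℝ) < η := by linarith
  have hp0 : 0 < P r := lt_of_lt_of_le (by positivity) (hPl r hr)
  have hP := (hPdiff r hr).hasDerivAt
  have hQ := (hQdiff r hr).hasDerivAt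
  have hPinv := hP.inv hp0.ne'
  have hK := (hP.add hPinv).add (hQ.mul hPinv)
  have hderiv : deriv (fun s => P s + (P s)⁻¹ + Q s * (P s)⁻¹) r =
      deriv P r + -deriv P r / P r ^ 2 +
        (deriv Q r * (P r)⁻¹ + Q r * (-deriv P r / P r ^ 2)) := hK.deriv
  rw [hderiv]
  have h1 := hodeP r hr
  have h2 := hodeQ r hr
  have key : r * (deriv P r + -deriv P r / P r ^ 2 +
      (deriv Q r * (P r)⁻¹ + Q r * (-deriv P r / P r ^ 2)))
      = E₁ r * (1 - (1 + Q r) / P r ^ 2) + Q r * E₂ r * (P r)⁻¹ := by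
    have hA : r * (deriv P r + -deriv P r / P r ^ 2 +
        (deriv Q r * (P r)⁻¹ + Q r * (-deriv P r / P r ^ 2)))
        = (r * deriv P r) * (1 - 1 / P r ^ 2 - Q r / P r ^ 2)
          + (r * deriv Q r) * (P r)⁻¹ := by ring
    rw [hA, h1, h2]
    field_simp
    ring
  rw [key]
  have hinv : (P r)⁻¹ ≤ 4 * η := by
    have := inv_anti₀ (by positivity : (0:ℝ) < (4*η)⁻¹) (hPl r hr)
    rwa [inv_inv] at this
  have hinv0 : 0 ≤ (P r)⁻¹ := le_of_lt (inv_pos.mpr hp0)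
  have hq0 := hQl r hr
  have hqu := hQu r hr
  have hE1 := hE₁ r hr
  have hE2 := hE₂ r hr
  have hs0 : 0 ≤ δ * Real.sqrt r := by positivity
  have hAbound : |1 - (1 + Q r) / P r ^ 2| ≤ 1 + 16*η^2 + 256*η^4 := by
    have hfrac : (1 + Q r) / P r ^ 2 ≤ 16*η^2 + 256*η^4 := by
      rw [div_eq_mul_inv, sq, mul_inv]
      nlinarith [mul_le_mul hinv hinv hinv0 (by positivity : (0:ℝ) ≤ 4*η)]
    have hfrac0 : 0 ≤ (1 + Q r) / P r ^ 2 := by positivity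
    rw [abs_le]
    constructor <;> nlinarith
  have hterm1 : |E₁ r| * |1 - (1 + Q r) / P r ^ 2|
      ≤ (δ * Real.sqrt r) * (1 + 16*η^2 + 256*η^4) :=
    mul_le_mul hE1 hAbound (abs_nonneg _) hs0
  have hterm2 : Q r * |E₂ r| * (P r)⁻¹ ≤ (64*η^3) * (δ * Real.sqrt r) := by
    have h1' : Q r * |E₂ r| ≤ 16*η^2 * (δ * Real.sqrt r) :=
      mul_le_mul hqu hE2 (abs_nonneg _) (by positivity)
    calc Q r * |E₂ r| * (P r)⁻¹ ≤ (16*η^2 * (δ * Real.sqrt r)) * (4*η) :=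
          mul_le_mul h1' hinv hinv0 (by positivity)
      _ = (64*η^3) * (δ * Real.sqrt r) := by ring
  calc |E₁ r * (1 - (1 + Q r) / P r ^ 2) + Q r * E₂ r * (P r)⁻¹|
      ≤ |E₁ r * (1 - (1 + Q r) / P r ^ 2)| + |Q r * E₂ r * (P r)⁻¹| := abs_add_le _ _
    _ = |E₁ r| * |1 - (1 + Q r) / P r ^ 2| + Q r * |E₂ r| * (P r)⁻¹ := by
        rw [abs_mul, abs_mul, abs_mul, abs_of_nonneg hq0, abs_of_nonneg hinv0]
    _ ≤ (δ * Real.sqrt r) * (1 + 16*η^2 + 256*η^4) + (64*η^3) * (δ * Real.sqrt r) := by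
        linarith
    _ = (1 + 16*η^2 + 64*η^3 + 256*η^4) * δ * Real.sqrt r := by ring
end

section
/- Suppose P, Q : (0, r₀] → ℝ satisfy the perturbed bounce ODE system with (4η)^{-1} ≤ P ≤ 4η, Q ≥ 0, and suppose Q(r) → 0 and P(r) → P_∞ as r → 0 with the integral of Q with respect to dr/r over (0, r₀] finite. If Q is not identically zero then P_∞ ≥ 1. Indeed, since r·(d/dr)log Q(r) = P(r)² - 1 - Q(r) - E_Q(r) converges to P_∞² - 1 as r → 0, boundedness of Q as r → 0 forces P_∞² ≥ 1. -/
/-- If Q > 0 solves r·Q' = Q·(P² - 1 - Q - E_Q) with |E_Q| ≤ √r,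
(4η)⁻¹ ≤ P ≤ 4η, P(r) → P_∞ and Q(r) → 0 as r → 0, and ∫₀^{r₀} Q(r)/r dr < ∞,
then P_∞ ≥ 1. -/
theorem stmt_5 (η r₀ Pinf : ℝ) (hη : 2 ≤ η) (hr₀ : 0 < r₀)
    (P Q EQ : ℝ → ℝ)
    (hPdiff : ∀ r ∈ Set.Ioc (0:ℝ) r₀, DifferentiableAt ℝ P r)
    (hQdiff : ∀ r ∈ Set.Ioc (0:ℝ) r₀, DifferentiableAt ℝ Q r)
    (hQpos : ∀ r ∈ Set.Ioc (0:ℝ) r₀, 0 < Q r)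
    (hEQ : ∀ r ∈ Set.Ioc (0:ℝ) r₀, |EQ r| ≤ Real.sqrt r)
    (hodeQ : ∀ r ∈ Set.Ioc (0:ℝ) r₀,
      r * deriv Q r = Q r * ((P r)^2 - 1 - Q r - EQ r))
    (hPl : ∀ r ∈ Set.Ioc (0:ℝ) r₀, (4*η)⁻¹ ≤ P r)
    (hPu : ∀ r ∈ Set.Ioc (0:ℝ) r₀, P r ≤ 4*η)
    (hPlim : Filter.Tendsto P (nhdsWithin 0 (Set.Ioc 0 r₀)) (nhds Pinf))
    (hQlim : Filter.Tendsto Q (nhdsWithin 0 (Set.Ioc 0 r₀)) (nhds 0))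
    (hint : MeasureTheory.IntegrableOn (fun r => Q r / r) (Set.Ioc 0 r₀)) :
    1 ≤ Pinf := by
  by_contra hP1
  push_neg at hP1
  -- the filter is nontrivial
  haveI hNB : (nhdsWithin (0:ℝ) (Set.Ioc 0 r₀)).NeBot := by
    apply mem_closure_iff_nhdsWithin_neBot.mp
    rw [closure_Ioc hr₀.ne]
    exact Set.left_mem_Icc.mpr hr₀.le
  -- Pinf ≥ 0
  have hPinf0 : (0:ℝ) ≤ Pinf := by
    have h4η : (0:ℝ) < (4*η)⁻¹ := by positivity
    have := ge_of_tendsto hPlim (Filter.eventually_of_mem self_mem_nhdsWithin hPl)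
    linarith
  have hsq : Pinf ^ 2 < 1 := by nlinarith
  set δ : ℝ := (1 - Pinf ^ 2) / 2 with hδ
  have hδpos : 0 < δ := by rw [hδ]; linarith
  -- eventually P r ^ 2 < 1 - δ and √r < δ
  have hPsq : Filter.Tendsto (fun r => P r ^ 2) (nhdsWithin 0 (Set.Ioc 0 r₀))
      (nhds (Pinf ^ 2)) := hPlim.pow 2
  have hev1 : ∀ᶠ r in nhdsWithin (0:ℝ) (Set.Ioc 0 r₀), P r ^ 2 < Pinf ^ 2 + δ :=
    hPsq.eventually (Filter.Tendsto.eventually_lt_const (by linarith) Filter.tendsto_id)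
  have hev2 : ∀ᶠ r in nhdsWithin (0:ℝ) (Set.Ioc 0 r₀), Real.sqrt r < δ := by
    have hs : Filter.Tendsto (fun r : ℝ => Real.sqrt r)
        (nhdsWithin 0 (Set.Ioc 0 r₀)) (nhds 0) := by
      have := (Real.continuous_sqrt.tendsto 0).mono_left
        (nhdsWithin_le_nhds (s := Set.Ioc 0 r₀))
      simpa using this
    exact hs.eventually (Filter.Tendsto.eventually_lt_const (by linarith) Filter.tendsto_id)
  have hev : ∀ᶠ r in nhdsWithin (0:ℝ) (Set.Ioc 0 r₀),
      P r ^ 2 < Pinf ^ 2 + δ ∧ Real.sqrt r < δ := hev1.and hev2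
  rw [eventually_nhdsWithin_iff, Metric.eventually_nhds_iff] at hev
  obtain ⟨ε, hεpos, hev⟩ := hev
  set δ₀ : ℝ := min (ε/2) r₀ with hδ₀
  have hδ₀pos : 0 < δ₀ := lt_min (by linarith) hr₀
  have hδ₀le : δ₀ ≤ r₀ := min_le_right _ _
  have hkey : ∀ r ∈ Set.Ioc (0:ℝ) δ₀, deriv Q r < 0 := by
    intro r hr
    have hrIoc : r ∈ Set.Ioc (0:ℝ) r₀ := ⟨hr.1, hr.2.trans hδ₀le⟩
    have hdist : dist r (0:ℝ) < ε := by
      rw [Real.dist_eq, sub_zero, abs_of_pos hr.1]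
      calc r ≤ δ₀ := hr.2
        _ ≤ ε/2 := min_le_left _ _
        _ < ε := by linarith
    obtain ⟨h1, h2⟩ := hev hdist hrIoc
    have hode := hodeQ r hrIoc
    have hQr := hQpos r hrIoc
    have hE := hEQ r hrIoc
    have hEge : -Real.sqrt r ≤ EQ r := neg_le_of_abs_le hE
    have hneg : (P r)^2 - 1 - Q r - EQ r < 0 := by
      have : Pinf ^ 2 + δ = 1 - δ := by rw [hδ]; ring
      nlinarith
    have hrQ : r * deriv Q r < 0 := by
      rw [hode]; exact mul_neg_of_pos_of_neg hQr hneg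
    nlinarith [hr.1]
  -- Q is strictly anti on Ioc 0 δ₀
  have hanti : StrictAntiOn Q (Set.Ioc 0 δ₀) := by
    apply StrictAntiOn.mono (s := Set.Ioc 0 δ₀) ?_ le_rfl
    apply strictAntiOn_of_deriv_neg (convex_Ioc 0 δ₀)
    · intro x hx
      exact ((hQdiff x ⟨hx.1, hx.2.trans hδ₀le⟩).continuousAt).continuousWithinAt
    · intro x hx
      rw [interior_Ioc] at hx
      exact hkey x ⟨hx.1, hx.2.le⟩
  have hδ₀mem : δ₀ ∈ Set.Ioc (0:ℝ) r₀ := ⟨hδ₀pos, hδ₀le⟩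
  have hQδ₀ : 0 < Q δ₀ := hQpos δ₀ hδ₀mem
  -- eventually Q r ≥ Q δ₀, contradicting Q → 0
  have hevQ : ∀ᶠ r in nhdsWithin (0:ℝ) (Set.Ioc 0 r₀), Q δ₀ ≤ Q r := by
    rw [eventually_nhdsWithin_iff, Metric.eventually_nhds_iff]
    refine ⟨δ₀, hδ₀pos, fun r hd hr => ?_⟩
    rw [Real.dist_eq, sub_zero] at hd
    have hr' : r < δ₀ := lt_of_abs_lt hd
    exact (hanti ⟨hr.1, hr'.le⟩ (Set.right_mem_Ioc.mpr hδ₀pos) hr').le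
  have := ge_of_tendsto hQlim hevQ
  linarith
end

section
/- Sobolev interpolation on the circle: for integers 0 ≤ N < K and f : S¹ → ℝ with ∂ₓ^K f ∈ L²(S¹), one has ‖∂ₓ^N f‖_{L^∞(S¹)} ≲_{N,K} ‖f‖_{L^∞(S¹)}^{1-α} · ‖∂ₓ^K f‖_{L²(S¹)}^α, where α = N/(K - 1/2). -/
open scoped Real

open Real MeasureTheory intervalIntegral Set

lemma per_deriv {f : ℝ → ℝ} {c : ℝ} (hf : Function.Periodic f c) :
    Function.Periodic (deriv f) c := by
  intro x
  have h1 : (fun y => f (y + c)) = f := funext hf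
  calc deriv f (x + c) = deriv (fun y => f (y + c)) x := (deriv_comp_add_const f c x).symm
  _ = deriv f x := by rw [h1]

lemma per_iter {f : ℝ → ℝ} {c : ℝ} (hf : Function.Periodic f c) (n : ℕ) :
    Function.Periodic (iteratedDeriv n f) c := by
  induction n with
  | zero => simpa using hf
  | succ n ih => rw [iteratedDeriv_succ]; exact per_deriv ih

lemma iter_iter {f : ℝ → ℝ} (m n : ℕ) :
    iteratedDeriv m (iteratedDeriv n f) = iteratedDeriv (m + n) f := by
  induction m with
  | zero => simp
  | succ m ih => rw [iteratedDeriv_succ, ih, ← iteratedDeriv_succ]; ring_nf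

lemma iter_zero_fun (m : ℕ) : iteratedDeriv m (fun _ : ℝ => (0:ℝ)) = fun _ => (0:ℝ) := by
  induction m with
  | zero => simp
  | succ m ih => rw [iteratedDeriv_succ, ih]; funext x; simp

lemma bdd_per {g : ℝ → ℝ} (hg : Continuous g) (hp : Function.Periodic g (2*π)) :
    BddAbove (Set.range fun x => |g x|) := by
  have hsub : (Set.range fun x => |g x|) ⊆ (fun x => |g x|) '' (Set.Icc 0 (2*π)) := by
    rintro v ⟨x, rfl⟩
    obtain ⟨y, hy, hxy⟩ := hp.exists_mem_Ico₀ (by positivity) x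
    exact ⟨y, ⟨hy.1, hy.2.le⟩, by simp [hxy]⟩
  exact (((isCompact_Icc).image (hg.abs)).bddAbove).mono hsub

lemma taylor_id {g g' g'' : ℝ → ℝ} (h1 : ∀ x, HasDerivAt g (g' x) x)
    (h2 : ∀ x, HasDerivAt g' (g'' x) x) (hc : Continuous g'') (x δ : ℝ) :
    ∫ t in x..(x+δ), (x + δ - t) * g'' t = g (x+δ) - g x - δ * g' x := by
  have key : ∀ t ∈ Set.uIcc x (x+δ),
      HasDerivAt (fun t => g t + (x + δ - t) * g' t) ((x + δ - t) * g'' t) t := by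
    intro t _
    have hprod : HasDerivAt (fun t => (x + δ - t) * g' t)
        ((-1) * g' t + (x + δ - t) * g'' t) t :=
      (((hasDerivAt_id t).const_sub (x+δ))).mul (h2 t)
    have : HasDerivAt (fun t => g t + (x + δ - t) * g' t)
        (g' t + ((-1) * g' t + (x + δ - t) * g'' t)) t := (h1 t).add hprod
    convert this using 1
    ring
  have hint : IntervalIntegrable (fun t => (x + δ - t) * g'' t) volume x (x+δ) :=
    (Continuous.mul (by continuity) hc).intervalIntegrable _ _
  rw [integral_eq_sub_of_hasDerivAt key hint]
  ring

lemma landau_step {g g' g'' : ℝ → ℝ} (h1 : ∀ x, HasDerivAt g (g' x) x)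
    (h2 : ∀ x, HasDerivAt g' (g'' x) x) (hc : Continuous g'')
    {Mg M2 : ℝ} (hMg : ∀ x, |g x| ≤ Mg) (hM2 : ∀ x, |g'' x| ≤ M2)
    {δ : ℝ} (hδ : 0 < δ) (x : ℝ) : |g' x| ≤ 2 * Mg / δ + δ * M2 := by
  have tid := taylor_id h1 h2 hc x δ
  have hbound : |∫ t in x..(x+δ), (x + δ - t) * g'' t| ≤ δ * M2 * |x + δ - x| := by
    rw [← Real.norm_eq_abs]
    apply intervalIntegral.norm_integral_le_of_norm_le_const
    intro t ht
    rw [Set.uIoc_of_le (by linarith)] at ht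
    have h1' : |x + δ - t| ≤ δ := by
      rw [abs_le]; constructor <;> [linarith [ht.1, ht.2]; linarith [ht.1, ht.2]]
    calc ‖(x + δ - t) * g'' t‖ = |x + δ - t| * |g'' t| := abs_mul _ _
    _ ≤ δ * M2 := by
        apply mul_le_mul h1' (hM2 t) (abs_nonneg _)
        linarith
  have hxx : |x + δ - x| = δ := by rw [show x + δ - x = δ by ring, abs_of_pos hδ]
  rw [hxx] at hbound
  have hδg : δ * g' x = g (x+δ) - g x - ∫ t in x..(x+δ), (x + δ - t) * g'' t := by
    rw [tid]; ring
  have : |δ * g' x| ≤ 2 * Mg + δ * M2 * δ := by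
    rw [hδg]
    calc |g (x+δ) - g x - ∫ t in x..(x+δ), (x + δ - t) * g'' t|
        ≤ |g (x+δ) - g x| + |∫ t in x..(x+δ), (x + δ - t) * g'' t| := abs_sub _ _
    _ ≤ (|g (x+δ)| + |g x|) + |∫ t in x..(x+δ), (x + δ - t) * g'' t| := by
          gcongr; exact abs_sub _ _
    _ ≤ Mg + Mg + δ * M2 * δ := by gcongr <;> first | exact hMg _ | exact hbound
    _ = 2 * Mg + δ * M2 * δ := by ring
  rw [abs_mul, abs_of_pos hδ] at this
  rw [div_add' _ _ _ hδ.ne']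
  rw [le_div_iff₀ hδ]
  nlinarith [this]

lemma cs_interval {u : ℝ → ℝ} (hu : Continuous u) {a b : ℝ} (hab : a ≤ b) :
    (∫ t in a..b, |u t|)^2 ≤ (b - a) * ∫ t in a..b, (u t)^2 := by
  set L := b - a with hL
  have hL0 : 0 ≤ L := by linarith
  rcases eq_or_lt_of_le hL0 with h0 | hpos
  · have hba : b = a := by linarith [hL.symm ▸ h0]
    simp [hba]
  set c := (∫ t in a..b, |u t|) / L with hc
  have hint1 : IntervalIntegrable (fun t => |u t|) volume a b := hu.abs.intervalIntegrable _ _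
  have hint2 : IntervalIntegrable (fun t => (u t)^2) volume a b :=
    (hu.pow 2).intervalIntegrable _ _
  have hexp : ∫ t in a..b, (|u t| - c)^2
      = (∫ t in a..b, (u t)^2) - 2*c*(∫ t in a..b, |u t|) + c^2 * L := by
    have : ∀ t, (|u t| - c)^2 = (u t)^2 - (2*c) * |u t| + c^2 := by
      intro t; rw [sub_sq]; rw [sq_abs]; ring
    rw [intervalIntegral.integral_congr (g := fun t => (u t)^2 - (2*c) * |u t| + c^2)
      (fun t _ => this t)]
    rw [intervalIntegral.integral_add (by
        exact hint2.sub (hint1.const_mul (2*c))) (intervalIntegrable_const)]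
    rw [intervalIntegral.integral_sub hint2 (hint1.const_mul (2*c))]
    rw [intervalIntegral.integral_const_mul, intervalIntegral.integral_const]
    ring_nf
    rw [hL]
    ring
  have hnn : 0 ≤ ∫ t in a..b, (|u t| - c)^2 := by
    apply intervalIntegral.integral_nonneg hab
    intro t _; positivity
  rw [hexp] at hnn
  have hcL : c * L = ∫ t in a..b, |u t| := by
    rw [hc]; field_simp
  nlinarith [sq_nonneg (∫ t in a..b, |u t|), hnn, hcL]

lemma exists_zero {g : ℝ → ℝ} (hg : Continuous g)
    (hint : ∫ t in (0:ℝ)..(2*π), g t = 0) : ∃ x₀, g x₀ = 0 := by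
  by_contra hno
  push_neg at hno
  have hii : IntervalIntegrable g volume 0 (2*π) := hg.intervalIntegrable _ _
  have h2π : (0:ℝ) < 2*π := by positivity
  rcases lt_or_gt_of_ne (hno 0) with hneg | hpos
  · have hall : ∀ x, g x < 0 := by
      intro x
      by_contra hx
      push_neg at hx
      have h0 : (0:ℝ) ∈ Set.uIcc (g x) (g 0) := by
        rw [Set.mem_uIcc]; right; exact ⟨hneg.le, hx⟩
      obtain ⟨z, _, hz⟩ := intermediate_value_uIcc (f := g) (a := x) (b := 0)
        (hg.continuousOn) h0
      exact hno z hz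
    have : (0:ℝ) < ∫ t in (0:ℝ)..(2*π), -g t := by
      apply intervalIntegral.intervalIntegral_pos_of_pos (f := fun t => -g t)
        (hii.neg) (fun x => by simpa using (hall x)) h2π
    rw [intervalIntegral.integral_neg, hint] at this
    simp at this
  · have hall : ∀ x, 0 < g x := by
      intro x
      by_contra hx
      push_neg at hx
      have h0 : (0:ℝ) ∈ Set.uIcc (g x) (g 0) := by
        rw [Set.mem_uIcc]; left; exact ⟨hx, hpos.le⟩
      obtain ⟨z, _, hz⟩ := intermediate_value_uIcc (f := g) (a := x) (b := 0)
        (hg.continuousOn) h0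
      exact hno z hz
    have : (0:ℝ) < ∫ t in (0:ℝ)..(2*π), g t :=
      intervalIntegral.intervalIntegral_pos_of_pos hii hall h2π
    rw [hint] at this
    exact lt_irrefl _ this

lemma per_int_eq {h : ℝ → ℝ} (hp : Function.Periodic h (2*π)) (x : ℝ) :
    ∫ t in x..(x+2*π), h t = ∫ t in (0:ℝ)..(2*π), h t := by
  have := hp.intervalIntegral_add_eq x 0
  simpa using this

lemma int_piece_le {h : ℝ → ℝ} (hc : Continuous h) (hnn : ∀ t, 0 ≤ h t)
    {x δ : ℝ} (h0 : 0 ≤ δ) (h2 : δ ≤ 2*π) :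
    ∫ t in x..(x+δ), h t ≤ ∫ t in x..(x+2*π), h t := by
  have hsplit : (∫ t in x..(x+δ), h t) + ∫ t in (x+δ)..(x+2*π), h t
      = ∫ t in x..(x+2*π), h t :=
    intervalIntegral.integral_add_adjacent_intervals
      (hc.intervalIntegrable _ _) (hc.intervalIntegrable _ _)
  have : 0 ≤ ∫ t in (x+δ)..(x+2*π), h t :=
    intervalIntegral.integral_nonneg (by linarith) (fun t _ => hnn t)
  linarith

lemma sup_le_integral_deriv {G g g' : ℝ → ℝ}
    (hG : ∀ x, HasDerivAt G (g x) x) (hGp : Function.Periodic G (2*π))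
    (hg : ∀ x, HasDerivAt g (g' x) x)
    (hgc : Continuous g) (hg'c : Continuous g')
    (hg'p : Function.Periodic g' (2*π)) (x : ℝ) :
    |g x| ≤ ∫ t in (0:ℝ)..(2*π), |g' t| := by
  have hgp : Function.Periodic g (2*π) := by
    intro y
    have h1 : (fun z => G (z + 2*π)) = G := funext hGp
    have d1 : deriv G = g := funext fun z => (hG z).deriv
    calc g (y + 2*π) = deriv G (y + 2*π) := by rw [d1]
    _ = deriv (fun z => G (z + 2*π)) y := (deriv_comp_add_const G (2*π) y).symm
    _ = deriv G y := by rw [h1]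
    _ = g y := by rw [d1]
  have h2π : (0:ℝ) < 2*π := by positivity
  -- integral of g over a period is zero
  have hint0 : ∫ t in (0:ℝ)..(2*π), g t = 0 := by
    have : ∫ t in (0:ℝ)..(2*π), g t = G (2*π) - G 0 := by
      apply intervalIntegral.integral_eq_sub_of_hasDerivAt
        (fun t _ => hG t) (hgc.intervalIntegrable _ _)
    rw [this]
    have := hGp 0
    rw [zero_add] at this
    rw [this, sub_self]
  obtain ⟨x₀, hx₀⟩ := exists_zero hgc hint0
  obtain ⟨y, hy, hxy⟩ := hgp.exists_mem_Ico h2π x x₀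
  have hftc : g y - g x₀ = ∫ t in x₀..y, g' t := by
    rw [intervalIntegral.integral_eq_sub_of_hasDerivAt
      (fun t _ => hg t) (hg'c.intervalIntegrable _ _)]
  have habs : |g x| = |∫ t in x₀..y, g' t| := by
    rw [hxy, ← hftc, hx₀, sub_zero]
  rw [habs]
  calc |∫ t in x₀..y, g' t| ≤ ∫ t in x₀..y, |g' t| :=
        intervalIntegral.abs_integral_le_integral_abs hy.1
  _ ≤ ∫ t in x₀..(x₀+2*π), |g' t| := by
      conv_lhs => rw [show y = x₀ + (y - x₀) by ring]
      exact int_piece_le hg'c.abs (fun t => abs_nonneg _)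
        (by linarith [hy.1]) (by linarith [hy.2])
  _ = ∫ t in (0:ℝ)..(2*π), |g' t| := per_int_eq (hg'p.comp abs) x₀

lemma convex_max0 (u : ℕ → ℝ) :
    ∀ n, (∀ j, j + 2 ≤ n → u (j+1) ≤ (u j + u (j+2))/2) → ∀ j ≤ n, u j ≤ max (u 0) (u n) := by
  intro n
  induction n with
  | zero =>
    intro _ j hj
    interval_cases j
    exact le_max_left _ _
  | succ n ih =>
    intro hc j hj
    have hcn : ∀ j, j + 2 ≤ n → u (j+1) ≤ (u j + u (j+2))/2 := fun j h => hc j (by omega)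
    have hn : u n ≤ max (u 0) (u (n+1)) := by
      rcases Nat.eq_zero_or_pos n with h0 | h1
      · subst h0; exact le_max_left _ _
      · obtain ⟨m, rfl⟩ : ∃ m, n = m + 1 := ⟨n-1, by omega⟩
        have h2 := hc m (by omega)
        have h3 := ih hcn m (by omega)
        rcases le_max_iff.1 h3 with h4 | h4
        · rcases le_total (u 0) (u (m+2)) with h5 | h5
          · apply le_max_of_le_right; linarith
          · apply le_max_of_le_left; linarith
        · apply le_max_of_le_right; linarith
    rcases Nat.lt_or_ge j (n+1) with hlt | hge
    · have := ih hcn j (by omega)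
      rcases le_max_iff.1 this with h | h
      · exact le_max_of_le_left h
      · exact h.trans hn
    · have : j = n+1 := by omega
      subst this; exact le_max_right _ _

lemma combine_mid {M1 Ma Mb : ℝ} (hMa : 0 < Ma) (hMb : 0 < Mb)
    (h1 : ∀ δ : ℝ, 0 < δ → M1 ≤ 2*Ma/δ + δ*Mb) : M1 ≤ 3 * Real.sqrt (Ma * Mb) := by
  set a := Real.sqrt Ma with ha
  set c := Real.sqrt Mb with hc
  have ha0 : 0 < a := Real.sqrt_pos.2 hMa
  have hc0 : 0 < c := Real.sqrt_pos.2 hMb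
  have ha2 : a^2 = Ma := Real.sq_sqrt hMa.le
  have hc2 : c^2 = Mb := Real.sq_sqrt hMb.le
  have hδ : (0:ℝ) < a / c := by positivity
  have h2 := h1 (a/c) hδ
  have hrw : 2*Ma/(a/c) + (a/c)*Mb = 3*(a*c) := by
    field_simp
    nlinarith [ha2, hc2]
  rw [hrw] at h2
  rwa [Real.sqrt_mul hMa.le, ← ha, ← hc]

lemma combine_top {M1 M B : ℝ} (hM : 0 < M) (hB : 0 < B)
    (h1 : ∀ δ : ℝ, 0 < δ → δ ≤ 2*π → M1 ≤ 2*M/δ + Real.sqrt δ * B)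
    (h2 : M1 ≤ Real.sqrt (2*π) * B) :
    M1 ≤ 3 * M ^ ((1:ℝ)/3) * B ^ ((2:ℝ)/3) := by
  have hπ : (0:ℝ) < 2*π := by positivity
  set X := M ^ ((1:ℝ)/3) with hXdef
  set Y := B ^ ((1:ℝ)/3) with hYdef
  have hX0 : 0 < X := Real.rpow_pos_of_pos hM _
  have hY0 : 0 < Y := Real.rpow_pos_of_pos hB _
  have hX3 : X^3 = M := by
    rw [hXdef, ← Real.rpow_natCast (M ^ ((1:ℝ)/3)) 3, ← Real.rpow_mul hM.le]
    norm_num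
  have hY3 : Y^3 = B := by
    rw [hYdef, ← Real.rpow_natCast (B ^ ((1:ℝ)/3)) 3, ← Real.rpow_mul hB.le]
    norm_num
  have hX2 : X^2 = M ^ ((2:ℝ)/3) := by
    rw [hXdef, ← Real.rpow_natCast (M ^ ((1:ℝ)/3)) 2, ← Real.rpow_mul hM.le]
    norm_num
  have hY2 : Y^2 = B ^ ((2:ℝ)/3) := by
    rw [hYdef, ← Real.rpow_natCast (B ^ ((1:ℝ)/3)) 2, ← Real.rpow_mul hB.le]
    norm_num
  have hgoal : 3 * M ^ ((1:ℝ)/3) * B ^ ((2:ℝ)/3) = 3 * X * Y^2 := by rw [hY2]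
  rw [hgoal]
  set δ₀ := X^2 / Y^2 with hδ₀def
  have hδ₀ : 0 < δ₀ := by positivity
  rcases le_or_gt δ₀ (2*π) with hle | hgt
  · have h3 := h1 δ₀ hδ₀ hle
    have hsq : Real.sqrt δ₀ = X / Y := by
      rw [hδ₀def, Real.sqrt_div (sq_nonneg X), Real.sqrt_sq hX0.le, Real.sqrt_sq hY0.le]
    have key : 2*M/δ₀ + Real.sqrt δ₀ * B = 3 * X * Y^2 := by
      rw [hsq, hδ₀def, ← hX3, ← hY3]
      field_simp
      ring
    linarith [key ▸ h3]
  · have hlt : Real.sqrt (2*π) * Y < X := by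
      have hsq2 : (Real.sqrt (2*π) * Y)^2 < X^2 := by
        rw [mul_pow, Real.sq_sqrt hπ.le]
        rw [hδ₀def] at hgt
        rw [lt_div_iff₀ (by positivity)] at hgt
        linarith
      exact lt_of_pow_lt_pow_left₀ 2 hX0.le hsq2
    calc M1 ≤ Real.sqrt (2*π) * B := h2
    _ = (Real.sqrt (2*π) * Y) * Y^2 := by rw [← hY3]; ring
    _ ≤ X * Y^2 := by nlinarith [sq_nonneg Y]
    _ ≤ 3 * X * Y^2 := by nlinarith [sq_nonneg Y]

lemma convex_max' (u : ℕ → ℝ) (n : ℕ)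
    (hc : ∀ j, j + 2 ≤ n → u (j+1) ≤ (u j + u (j+2))/2) : ∀ j ≤ n, u j ≤ max (u 0) (u n) :=
  convex_max0 u n hc


lemma chain_bound (m : ℕ) (M : ℕ → ℝ) (B : ℝ)
    (hMpos : ∀ j, j ≤ m+1 → 0 < M j) (hB : 0 < B)
    (hmid : ∀ j, j + 2 ≤ m+1 → M (j+1) ≤ 3 * Real.sqrt (M j * M (j+2)))
    (htop : M (m+1) ≤ 3 * (M m) ^ ((1:ℝ)/3) * B ^ ((2:ℝ)/3))
    (N : ℕ) (hN : N ≤ m+1) :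
    M N ≤ Real.exp ((3/2) * (Real.log 3 * (1 + ((m:ℝ)+1)^2)))
      * (M 0) ^ ((1:ℝ) - (N:ℝ)/((m:ℝ)+3/2)) * B ^ ((N:ℝ)/((m:ℝ)+3/2)) := by
  have hL0 : 0 < Real.log 3 := Real.log_pos (by norm_num)
  set L := Real.log 3 with hL
  set C := L * (1 + ((m:ℝ)+1)^2) with hC
  set b := Real.log B with hb
  set y : ℕ → ℝ := fun j => Real.log (M j) with hy
  set s := (b - y 0)/((m:ℝ)+3/2) with hs
  set u : ℕ → ℝ := fun j => y j - y 0 - (j:ℝ)*s + L*(j:ℝ)^2 with hu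
  have hy' : ∀ j, y j = Real.log (M j) := fun j => by rw [hy]
  have hu' : ∀ j, u j = y j - y 0 - (j:ℝ)*s + L*(j:ℝ)^2 := fun j => by rw [hu]
  clear_value L C b y s u
  have hC0 : 0 < C := by rw [hC]; positivity
  have hm32 : (0:ℝ) < (m:ℝ)+3/2 := by positivity
  have hs_eq : s * ((m:ℝ)+3/2) = b - y 0 := by rw [hs]; field_simp
  have hymid : ∀ j, j + 2 ≤ m+1 → y (j+1) ≤ L + (y j + y (j+2))/2 := by
    intro j hj
    have h1 := hmid j hj
    have hMj := hMpos j (by omega)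
    have hMj2 := hMpos (j+2) (by omega)
    have h2 : Real.log (M (j+1)) ≤ Real.log (3 * Real.sqrt (M j * M (j+2))) :=
      Real.log_le_log (hMpos (j+1) (by omega)) h1
    rw [Real.log_mul (by norm_num) (by positivity), Real.log_sqrt (by positivity),
      Real.log_mul hMj.ne' hMj2.ne'] at h2
    rw [← hL] at h2
    rw [hy' (j+1), hy' j, hy' (j+2)]
    linarith
  have hconv : ∀ j, j + 2 ≤ m+1 → u (j+1) ≤ (u j + u (j+2))/2 := by
    intro j hj
    have h1 := hymid j hj
    rw [hu' (j+1), hu' j, hu' (j+2)]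
    push_cast
    nlinarith [h1]
  have hytop : y (m+1) ≤ L + y m / 3 + (2/3)*b := by
    have hMm := hMpos m (by omega)
    have h2 : Real.log (M (m+1)) ≤ Real.log (3 * (M m) ^ ((1:ℝ)/3) * B ^ ((2:ℝ)/3)) :=
      Real.log_le_log (hMpos (m+1) (by omega)) htop
    rw [Real.log_mul (by positivity) (by positivity),
      Real.log_mul (by norm_num) (by positivity),
      Real.log_rpow hMm, Real.log_rpow hB] at h2
    rw [← hL, ← hb] at h2
    rw [hy' (m+1), hy' m]
    linarith
  have hutop : u (m+1) ≤ u m / 3 + C := by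
    rw [hu' (m+1), hu' m, hC]
    push_cast
    nlinarith [hytop, hs_eq, mul_nonneg hL0.le (sq_nonneg (m:ℝ)), hL0]
  have hu0 : u 0 = 0 := by rw [hu' 0]; simp
  have hmax := convex_max' u (m+1) hconv
  have hum1 : u (m+1) ≤ (3/2) * C := by
    have hm := hmax m (by omega)
    rw [hu0] at hm
    rcases le_total (u (m+1)) 0 with h | h
    · linarith
    · rw [max_eq_right h] at hm
      linarith
  have huN : u N ≤ (3/2) * C := by
    have h2 := hmax N hN
    rw [hu0] at h2
    rcases le_total (u (m+1)) 0 with h | h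
    · rw [max_eq_left h] at h2; linarith
    · rw [max_eq_right h] at h2; linarith
  have hyN : y N ≤ y 0 + (N:ℝ)*s + (3/2)*C := by
    have hLN : 0 ≤ L*(N:ℝ)^2 := by rw [hL]; positivity
    rw [hu' N] at huN
    linarith
  set α := (N:ℝ)/((m:ℝ)+3/2) with hα
  have hNs : (N:ℝ)*s = α*(b - y 0) := by rw [hα, hs]; ring
  have hsplit : y 0 + (N:ℝ)*s = (1-α)*(y 0) + α*b := by rw [hNs]; ring
  calc M N = Real.exp (y N) := by rw [hy' N, Real.exp_log (hMpos N hN)]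
  _ ≤ Real.exp ((3/2)*C + ((1-α)*(y 0) + α*b)) := by
      apply Real.exp_le_exp.2
      rw [← hsplit]
      linarith
  _ = Real.exp ((3/2)*C) * Real.exp ((1-α)*(y 0)) * Real.exp (α*b) := by
      rw [Real.exp_add, Real.exp_add]
      ring
  _ = Real.exp ((3/2)*C) * (M 0) ^ ((1:ℝ) - α) * B ^ α := by
      have e1 : (M 0) ^ ((1:ℝ) - α) = Real.exp ((1-α)*(y 0)) := by
        rw [Real.rpow_def_of_pos (hMpos 0 (by omega))]
        congr 1
        rw [hy' 0]
        ring
      have e2 : B ^ α = Real.exp (α*b) := by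
        rw [Real.rpow_def_of_pos hB]
        congr 1
        rw [hb]
        ring
      rw [e1, e2]
lemma top_step {g g' g'' : ℝ → ℝ} (h1 : ∀ x, HasDerivAt g (g' x) x)
    (h2 : ∀ x, HasDerivAt g' (g'' x) x) (hc : Continuous g'')
    (hp'' : Function.Periodic (fun t => (g'' t)^2) (2*π))
    {Mg : ℝ} (hMg : ∀ x, |g x| ≤ Mg)
    {δ : ℝ} (hδ : 0 < δ) (hδ2 : δ ≤ 2*π) (x : ℝ) :
    |g' x| ≤ 2*Mg/δ + Real.sqrt δ * Real.sqrt (∫ t in (0:ℝ)..(2*π), (g'' t)^2) := by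
  set I := ∫ t in (0:ℝ)..(2*π), (g'' t)^2 with hI
  have hI0 : 0 ≤ I := by
    rw [hI]
    exact intervalIntegral.integral_nonneg (by positivity) (fun t _ => sq_nonneg _)
  have hIloc : ∫ t in x..(x+δ), (g'' t)^2 ≤ I := by
    calc ∫ t in x..(x+δ), (g'' t)^2 ≤ ∫ t in x..(x+2*π), (g'' t)^2 :=
        int_piece_le (by continuity) (fun t => sq_nonneg _) hδ.le hδ2
    _ = I := per_int_eq hp'' x
  have hJ0 : 0 ≤ ∫ t in x..(x+δ), |g'' t| :=
    intervalIntegral.integral_nonneg (by linarith) (fun t _ => abs_nonneg _)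
  have hJsq : (∫ t in x..(x+δ), |g'' t|)^2 ≤ δ * I := by
    calc (∫ t in x..(x+δ), |g'' t|)^2
        ≤ ((x+δ) - x) * ∫ t in x..(x+δ), (g'' t)^2 := cs_interval hc (by linarith)
    _ = δ * ∫ t in x..(x+δ), (g'' t)^2 := by ring_nf
    _ ≤ δ * I := mul_le_mul_of_nonneg_left hIloc hδ.le
  have hJ : ∫ t in x..(x+δ), |g'' t| ≤ Real.sqrt δ * Real.sqrt I := by
    rw [← Real.sqrt_mul hδ.le]
    exact (Real.le_sqrt hJ0 (by positivity)).2 hJsq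
  have hrem : |∫ t in x..(x+δ), (x + δ - t) * g'' t| ≤ δ * (Real.sqrt δ * Real.sqrt I) := by
    calc |∫ t in x..(x+δ), (x + δ - t) * g'' t|
        ≤ ∫ t in x..(x+δ), |(x + δ - t) * g'' t| :=
        intervalIntegral.abs_integral_le_integral_abs (by linarith)
    _ ≤ ∫ t in x..(x+δ), δ * |g'' t| := by
        apply intervalIntegral.integral_mono_on (by linarith)
          ((Continuous.abs (by continuity)).intervalIntegrable _ _)
          (((continuous_const.mul hc.abs)).intervalIntegrable _ _)
        intro t ht
        rw [abs_mul]
        apply mul_le_mul_of_nonneg_right _ (abs_nonneg _)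
        rw [abs_le]
        constructor <;> [linarith [ht.1, ht.2]; linarith [ht.1, ht.2]]
    _ = δ * ∫ t in x..(x+δ), |g'' t| := intervalIntegral.integral_const_mul δ _
    _ ≤ δ * (Real.sqrt δ * Real.sqrt I) := mul_le_mul_of_nonneg_left hJ hδ.le
  have tid := taylor_id h1 h2 hc x δ
  have hδg : δ * g' x = g (x+δ) - g x - ∫ t in x..(x+δ), (x + δ - t) * g'' t := by
    rw [tid]; ring
  have habs : δ * |g' x| ≤ 2*Mg + δ * (Real.sqrt δ * Real.sqrt I) := by
    have h3 : |δ * g' x| ≤ 2*Mg + δ * (Real.sqrt δ * Real.sqrt I) := by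
      rw [hδg]
      calc |g (x+δ) - g x - ∫ t in x..(x+δ), (x + δ - t) * g'' t|
          ≤ |g (x+δ) - g x| + |∫ t in x..(x+δ), (x + δ - t) * g'' t| := abs_sub _ _
      _ ≤ (|g (x+δ)| + |g x|) + |∫ t in x..(x+δ), (x + δ - t) * g'' t| := by
          gcongr; exact abs_sub _ _
      _ ≤ (Mg + Mg) + δ * (Real.sqrt δ * Real.sqrt I) := by
          gcongr <;> first | exact hMg _ | exact hrem
      _ = 2*Mg + δ * (Real.sqrt δ * Real.sqrt I) := by ring
    rwa [abs_mul, abs_of_pos hδ] at h3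
  have hrw : 2*Mg/δ + Real.sqrt δ * Real.sqrt I
      = (2*Mg + δ * (Real.sqrt δ * Real.sqrt I))/δ := by
    field_simp
  rw [hrw, le_div_iff₀ hδ]
  nlinarith [habs]


/-- Sobolev interpolation on the circle: for 0 ≤ N < K and f smooth
2π-periodic, ‖∂ₓᴺf‖_{L^∞} ≲_{N,K} ‖f‖_{L^∞}^{1-α}·‖∂ₓᴷf‖_{L²}^α with α = N/(K-1/2). -/
theorem stmt_7 (N K : ℕ) (hNK : N < K) :
    ∃ c : ℝ, 0 < c ∧
      ∀ f : ℝ → ℝ, Function.Periodic f (2 * Real.pi) → ContDiff ℝ K f →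
        sSup (Set.range fun x => |iteratedDeriv N f x|) ≤
          c * (sSup (Set.range fun x => |f x|)) ^ ((1:ℝ) - (N : ℝ) / ((K : ℝ) - 1/2))
            * (Real.sqrt (∫ x in (0:ℝ)..(2 * Real.pi), (iteratedDeriv K f x)^2))
              ^ ((N : ℝ) / ((K : ℝ) - 1/2)) := by
  set c := Real.exp ((3/2) * (Real.log 3 * (1 + ((K:ℝ)-1)^2))) with hc
  have hc1 : 1 ≤ c := by
    rw [hc]
    apply Real.one_le_exp
    have h3 : (0:ℝ) ≤ Real.log 3 := Real.log_nonneg (by norm_num)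
    positivity
  have hc0 : (0:ℝ) < c := lt_of_lt_of_le one_pos hc1
  refine ⟨c, hc0, ?_⟩
  intro f hper hf
  have hfD0 : (fun x => |f x|) = (fun x => |iteratedDeriv 0 f x|) := by
    funext x
    rw [iteratedDeriv_zero]
  rw [hfD0]
  -- basic facts about iterated derivatives
  have hDc : ∀ j : ℕ, j ≤ K → Continuous (iteratedDeriv j f) := by
    intro j hj
    exact hf.continuous_iteratedDeriv j (by exact_mod_cast hj)
  have hDd : ∀ j : ℕ, j < K → ∀ x, HasDerivAt (iteratedDeriv j f) (iteratedDeriv (j+1) f x) x := by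
    intro j hj x
    have hdiff : Differentiable ℝ (iteratedDeriv j f) :=
      hf.differentiable_iteratedDeriv j (by exact_mod_cast hj)
    rw [iteratedDeriv_succ]
    exact (hdiff x).hasDerivAt
  have hDp : ∀ j : ℕ, Function.Periodic (iteratedDeriv j f) (2*π) := fun j => per_iter hper j
  set M : ℕ → ℝ := fun j => sSup (Set.range fun x => |iteratedDeriv j f x|) with hM
  have hbdd : ∀ j : ℕ, j ≤ K → BddAbove (Set.range fun x => |iteratedDeriv j f x|) :=
    fun j hj => bdd_per (hDc j hj) (hDp j)
  have hMle : ∀ j : ℕ, j ≤ K → ∀ x, |iteratedDeriv j f x| ≤ M j := by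
    intro j hj x
    exact le_csSup (hbdd j hj) (Set.mem_range_self x)
  have hMub : ∀ j : ℕ, ∀ {C : ℝ}, (∀ x, |iteratedDeriv j f x| ≤ C) → M j ≤ C := by
    intro j C h
    apply csSup_le (Set.range_nonempty _)
    rintro v ⟨x, rfl⟩
    exact h x
  have hM0 : ∀ j : ℕ, j ≤ K → 0 ≤ M j := fun j hj => (abs_nonneg _).trans (hMle j hj 0)
  set I := ∫ x in (0:ℝ)..(2 * π), (iteratedDeriv K f x)^2 with hI
  have hI0 : 0 ≤ I := by
    rw [hI]
    exact intervalIntegral.integral_nonneg (by positivity) (fun t _ => sq_nonneg _)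
  set B := Real.sqrt I with hB
  have hB0 : 0 ≤ B := Real.sqrt_nonneg _
  show M N ≤ c * (M 0) ^ ((1:ℝ) - (N : ℝ) / ((K : ℝ) - 1/2)) * B ^ ((N : ℝ) / ((K : ℝ) - 1/2))
  have hRHS0 : 0 ≤ c * (M 0) ^ ((1:ℝ) - (N : ℝ) / ((K : ℝ) - 1/2))
      * B ^ ((N : ℝ) / ((K : ℝ) - 1/2)) := by
    apply mul_nonneg (mul_nonneg hc0.le _) _
    · exact Real.rpow_nonneg (hM0 0 (by omega)) _
    · exact Real.rpow_nonneg hB0 _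
  rcases Nat.eq_zero_or_pos N with hN0 | hN1
  · -- N = 0
    subst hN0
    simp only [Nat.cast_zero, zero_div, Real.rpow_zero, sub_zero, Real.rpow_one, mul_one]
    have h1 := hM0 0 (by omega)
    nlinarith [h1, hc1]
  · -- N ≥ 1, hence K ≥ 2
    obtain ⟨m, rfl⟩ : ∃ m, K = m + 2 := ⟨K - 2, by omega⟩
    have hNm : N ≤ m + 1 := by omega
    rcases le_or_gt (M 0) 0 with hA | hA
    · -- f ≡ 0
      have hf0 : f = fun _ => 0 := by
        funext x
        have h1 := hMle 0 (by omega) x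
        rw [iteratedDeriv_zero] at h1
        have := abs_nonneg (f x)
        have : |f x| = 0 := le_antisymm (h1.trans hA) (abs_nonneg _)
        simpa using this
      have hDN : iteratedDeriv N f = fun _ => 0 := by rw [hf0, iter_zero_fun]
      have hLHS : M N ≤ 0 := by
        apply hMub
        intro x
        rw [hDN]
        simp
      linarith
    rcases le_or_gt B 0 with hBz | hBpos
    · -- B = 0 : all derivatives vanish
      have hBeq : B = 0 := le_antisymm hBz hB0
      have hIeq : I = 0 := by
        rw [hB] at hBeq
        exact (Real.sqrt_eq_zero hI0).1 hBeq
      have habsint : ∫ t in (0:ℝ)..(2*π), |iteratedDeriv (m+2) f t| = 0 := by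
        have hcs := cs_interval (hDc (m+2) le_rfl) (by positivity : (0:ℝ) ≤ 2*π)
        have h2 : 0 ≤ ∫ t in (0:ℝ)..(2*π), |iteratedDeriv (m+2) f t| :=
          intervalIntegral.integral_nonneg (by positivity) (fun t _ => abs_nonneg _)
        rw [← hI, hIeq] at hcs
        nlinarith [hcs, h2]
      have hzero : ∀ d : ℕ, d ≤ m → ∀ x, iteratedDeriv (m+1-d) f x = 0 := by
        intro d
        induction d with
        | zero =>
          intro _ x
          simp only [Nat.sub_zero]
          have h1 := sup_le_integral_deriv (hDd m (by omega)) (hDp m)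
            (hDd (m+1) (by omega)) (hDc (m+1) (by omega)) (hDc (m+2) le_rfl)
            (hDp (m+2)) x
          rw [habsint] at h1
          exact abs_eq_zero.1 (le_antisymm h1 (abs_nonneg _))
        | succ d ih =>
          intro hd x
          obtain ⟨e, he⟩ : ∃ e, m - d = e + 1 := ⟨m - d - 1, by omega⟩
          have hidx : m + 1 - (d+1) = e + 1 := by omega
          have hidx2 : e + 2 = m + 1 - d := by omega
          rw [hidx]
          have hprev : ∀ t, iteratedDeriv (e+2) f t = 0 := by
            intro t
            have := ih (by omega) t
            rw [← hidx2] at this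
            exact this
          have h1 := sup_le_integral_deriv (hDd e (by omega)) (hDp e)
            (hDd (e+1) (by omega)) (hDc (e+1) (by omega)) (hDc (e+2) (by omega))
            (hDp (e+2)) x
          have hzint : ∫ t in (0:ℝ)..(2*π), |iteratedDeriv (e+2) f t| = 0 := by
            have : (fun t => |iteratedDeriv (e+2) f t|) = fun _ => (0:ℝ) := by
              funext t; rw [hprev t]; simp
            rw [this]
            simp
          rw [hzint] at h1
          exact abs_eq_zero.1 (le_antisymm h1 (abs_nonneg _))
      have hDN : ∀ x, iteratedDeriv N f x = 0 := by
        intro x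
        have h1 := hzero (m+1-N) (by omega) x
        have hidx : m + 1 - (m+1-N) = N := by omega
        rw [hidx] at h1
        exact h1
      have hLHS : M N ≤ 0 := by
        apply hMub
        intro x
        rw [hDN x]
        simp
      linarith
    · -- main case
      have hApos : 0 < M 0 := hA
      have hMpos : ∀ j : ℕ, j ≤ m+1 → 0 < M j := by
        intro j hj
        rcases Nat.eq_zero_or_pos j with rfl | hj1
        · exact hApos
        by_contra hle
        push_neg at hle
        have hDj : iteratedDeriv j f = fun _ => 0 := by
          funext x
          have h1 := hMle j (by omega) x
          exact abs_eq_zero.1 (le_antisymm (h1.trans hle) (abs_nonneg _))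
        have hDK : iteratedDeriv (m+2) f = fun _ => 0 := by
          have h2 : iteratedDeriv (m+2-j) (iteratedDeriv j f) = iteratedDeriv (m+2) f := by
            rw [iter_iter]
            have hjj : m + 2 - j + j = m + 2 := by omega
            rw [hjj]
          rw [← h2, hDj, iter_zero_fun]
        have hIz : I = 0 := by
          rw [hI]
          have : (fun x => (iteratedDeriv (m+2) f x)^2) = fun _ => (0:ℝ) := by
            funext x; rw [hDK]; simp
          rw [this]
          simp
        rw [hB, hIz] at hBpos
        simp at hBpos
      have hmid : ∀ j : ℕ, j + 2 ≤ m+1 → M (j+1) ≤ 3 * Real.sqrt (M j * M (j+2)) := by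
        intro j hj
        apply combine_mid (hMpos j (by omega)) (hMpos (j+2) (by omega))
        intro δ hδ
        apply hMub
        intro x
        exact landau_step (hDd j (by omega)) (hDd (j+1) (by omega)) (hDc (j+2) (by omega))
          (hMle j (by omega)) (hMle (j+2) (by omega)) hδ x
      have htop : M (m+1) ≤ 3 * (M m) ^ ((1:ℝ)/3) * B ^ ((2:ℝ)/3) := by
        apply combine_top (hMpos m (by omega)) hBpos
        · intro δ hδ hδ2
          apply hMub
          intro x
          have := top_step (hDd m (by omega)) (hDd (m+1) (by omega)) (hDc (m+2) le_rfl)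
            ((hDp (m+2)).comp (fun y => y^2)) (hMle m (by omega)) hδ hδ2 x
          rw [hB, hI]
          exact this
        · apply hMub
          intro x
          have h1 := sup_le_integral_deriv (hDd m (by omega)) (hDp m)
            (hDd (m+1) (by omega)) (hDc (m+1) (by omega)) (hDc (m+2) le_rfl)
            (hDp (m+2)) x
          have h2 : ∫ t in (0:ℝ)..(2*π), |iteratedDeriv (m+2) f t|
              ≤ Real.sqrt (2*π) * B := by
            have hcs := cs_interval (hDc (m+2) le_rfl) (by positivity : (0:ℝ) ≤ 2*π)
            have hnn : 0 ≤ ∫ t in (0:ℝ)..(2*π), |iteratedDeriv (m+2) f t| :=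
              intervalIntegral.integral_nonneg (by positivity) (fun t _ => abs_nonneg _)
            rw [hB, ← Real.sqrt_mul (by positivity : (0:ℝ) ≤ 2*π)]
            apply (Real.le_sqrt hnn (by positivity : 0 ≤ 2*π*I)).2
            rw [hI]
            calc (∫ t in (0:ℝ)..(2*π), |iteratedDeriv (m+2) f t|)^2
                ≤ (2*π - 0) * ∫ t in (0:ℝ)..(2*π), (iteratedDeriv (m+2) f t)^2 := hcs
            _ = 2*π * ∫ t in (0:ℝ)..(2*π), (iteratedDeriv (m+2) f t)^2 := by ring_nf
          exact h1.trans h2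
      have hchain := chain_bound m M B hMpos hBpos hmid htop N hNm
      have hcast1 : ((m+2:ℕ):ℝ) - 1/2 = (m:ℝ) + 3/2 := by push_cast; ring
      have hcast2 : ((m+2:ℕ):ℝ) - 1 = (m:ℝ) + 1 := by push_cast; ring
      rw [hc, hcast1, hcast2]
      exact hchain
end

section
/- Energy hierarchy via Grönwall: suppose for 0 ≤ K ≤ N nonnegative C¹ functions E_K : [r_b, r₀] → ℝ (with r_b > 0, r₀ ≤ 1) satisfy r·(d/dr)(r^{2A}·E_K(r)) ≥ -C₁·r^{1-γ}·(r^{2A}·E_K(r)) - C₂·Σ_{k=0}^{K-1} r^{-2γ(K-k)}·(r^{2A}·E_k(r)) for K ≥ 1, and r·(d/dr)(r^{2A}·E₀(r)) ≥ -C₁·r^{1-γ}·(r^{2A}·E₀(r)) - A·r^{2A}, where A, C₁, C₂ > 0, 0 < γ < 1/100, and r₀^{2A}·Σ_k E_k(r₀) ≤ ζ. Then there exist constants D_K (depending on C₁, C₂, A, ζ, K, γ) such that r^{2A}·E_K(r) ≤ D_K·r^{-2γK} for all r ∈ [r_b, r₀]. -/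
open scoped BigOperators


lemma mono_aux {a b : ℝ} {H H' : ℝ → ℝ}
    (hd : ∀ r ∈ Set.Icc a b, HasDerivAt H (H' r) r)
    (hpos : ∀ r ∈ Set.Icc a b, 0 ≤ H' r) :
    ∀ r ∈ Set.Icc a b, H r ≤ H b := by
  rcases le_or_gt b a with hba | hab
  · intro r hr
    have : r = b := le_antisymm hr.2 (hba.trans hr.1)
    simp [this]
  have hmono : MonotoneOn H (Set.Icc a b) := by
    apply monotoneOn_of_deriv_nonneg (convex_Icc a b)
    · exact fun r hr => (hd r hr).continuousAt.continuousWithinAt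
    · intro r hr
      rw [interior_Icc] at hr
      exact (hd r (Set.Ioo_subset_Icc_self hr)).differentiableAt.differentiableWithinAt
    · intro r hr
      rw [interior_Icc] at hr
      rw [(hd r (Set.Ioo_subset_Icc_self hr)).deriv]
      exact hpos r (Set.Ioo_subset_Icc_self hr)
  intro r hr
  exact hmono hr (Set.right_mem_Icc.mpr hab.le) hr.2

lemma gronwall_aux (C₁ γ Cf p a b : ℝ) (F F' : ℝ → ℝ)
    (hC₁ : 0 < C₁) (hγ : 0 < γ) (hγ1 : γ < 1/2) (hCf : 0 ≤ Cf) (hp : p ≠ 0)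
    (ha : 0 < a) (hab : a < b) (hb1 : b ≤ 1)
    (hF : ∀ r ∈ Set.Icc a b, 0 ≤ F r)
    (hd : ∀ r ∈ Set.Icc a b, HasDerivAt F (F' r) r)
    (hineq : ∀ r ∈ Set.Icc a b, -C₁ * r ^ (1-γ) * F r - Cf * r ^ p ≤ r * F' r) :
    ∀ r ∈ Set.Icc a b, F r ≤ Real.exp (2*C₁) * F b +
      (Real.exp (2*C₁) * Cf / p) * (b ^ p - r ^ p) := by
  set φ : ℝ → ℝ := fun s => C₁/(1-γ) * s ^ (1-γ) with hφdef
  set c : ℝ := Real.exp (2*C₁) * Cf / p with hcdef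
  set H : ℝ → ℝ := fun s => Real.exp (φ s) * F s + c * s ^ p with hHdef
  have h1γ : (0:ℝ) < 1 - γ := by linarith
  -- basic facts on Icc
  have hrpos : ∀ r ∈ Set.Icc a b, 0 < r := fun r hr => lt_of_lt_of_le ha hr.1
  have hrle1 : ∀ r ∈ Set.Icc a b, r ≤ 1 := fun r hr => hr.2.trans hb1
  have hφ0 : ∀ r ∈ Set.Icc a b, 0 ≤ φ r := by
    intro r hr
    have := Real.rpow_nonneg (hrpos r hr).le (1-γ)
    have : (0:ℝ) ≤ C₁/(1-γ) := by positivity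
    positivity
  have hφle : ∀ r ∈ Set.Icc a b, φ r ≤ 2*C₁ := by
    intro r hr
    have h1 : r ^ (1-γ) ≤ 1 :=
      Real.rpow_le_one (hrpos r hr).le (hrle1 r hr) h1γ.le
    have h2 : C₁/(1-γ) * r ^ (1-γ) ≤ C₁/(1-γ) * 1 := by
      apply mul_le_mul_of_nonneg_left h1 (by positivity)
    have h3 : C₁/(1-γ) ≤ 2*C₁ := by
      rw [div_le_iff₀ h1γ]
      nlinarith
    calc φ r ≤ C₁/(1-γ) * 1 := h2
    _ ≤ 2*C₁ := by linarith
  have hexple : ∀ r ∈ Set.Icc a b, Real.exp (φ r) ≤ Real.exp (2*C₁) :=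
    fun r hr => Real.exp_le_exp.mpr (hφle r hr)
  have hexpge : ∀ r ∈ Set.Icc a b, 1 ≤ Real.exp (φ r) :=
    fun r hr => Real.one_le_exp (hφ0 r hr)
  -- derivative of H
  have hHd : ∀ r ∈ Set.Icc a b, HasDerivAt H
      (Real.exp (φ r) * (C₁ * r ^ (-γ) * F r + F' r) + c * (p * r ^ (p-1))) r := by
    intro r hr
    have hr0 : r ≠ 0 := (hrpos r hr).ne'
    have hφd : HasDerivAt φ (C₁ * r ^ (-γ)) r := by
      have h := (Real.hasDerivAt_rpow_const (p := 1-γ) (Or.inl hr0)).const_mul (C₁/(1-γ))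
      refine h.congr_deriv ?_
      rw [show (1-γ-1) = -γ by ring]
      field_simp
    have hexpd : HasDerivAt (fun s => Real.exp (φ s))
        (Real.exp (φ r) * (C₁ * r ^ (-γ))) r := hφd.exp
    have hFd := hd r hr
    have hprod := hexpd.mul hFd
    have hpow : HasDerivAt (fun s : ℝ => c * s ^ p) (c * (p * r ^ (p-1))) r :=
      (Real.hasDerivAt_rpow_const (p := p) (Or.inl hr0)).const_mul c
    have := hprod.add hpow
    refine this.congr_deriv ?_
    ring
  -- nonnegativity of H'
  have hH'pos : ∀ r ∈ Set.Icc a b,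
      0 ≤ Real.exp (φ r) * (C₁ * r ^ (-γ) * F r + F' r) + c * (p * r ^ (p-1)) := by
    intro r hr
    have hr0 : 0 < r := hrpos r hr
    have hcp : c * p = Real.exp (2*C₁) * Cf := by
      rw [hcdef]; field_simp
    have key : -(Cf * r ^ (p-1)) ≤ C₁ * r ^ (-γ) * F r + F' r := by
      have h := hineq r hr
      have e1 : r ^ (1-γ) = r ^ (-γ) * r := by
        rw [← Real.rpow_add_one hr0.ne' (-γ)]; congr 1; ring
      have e2 : r ^ p = r ^ (p-1) * r := by
        rw [← Real.rpow_add_one hr0.ne' (p-1)]; congr 1; ring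
      rw [e1, e2] at h
      nlinarith [h]
    have hpowpos : (0:ℝ) ≤ Cf * r ^ (p-1) := by positivity
    have h2 : -(Real.exp (2*C₁) * (Cf * r ^ (p-1))) ≤
        Real.exp (φ r) * (C₁ * r ^ (-γ) * F r + F' r) := by
      calc -(Real.exp (2*C₁) * (Cf * r ^ (p-1)))
          ≤ -(Real.exp (φ r) * (Cf * r ^ (p-1))) := by
            apply neg_le_neg
            exact mul_le_mul_of_nonneg_right (hexple r hr) hpowpos
        _ = Real.exp (φ r) * (-(Cf * r ^ (p-1))) := by ring
        _ ≤ Real.exp (φ r) * (C₁ * r ^ (-γ) * F r + F' r) :=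
            mul_le_mul_of_nonneg_left key (Real.exp_nonneg _)
    have e3 : c * (p * r ^ (p-1)) = Real.exp (2*C₁) * (Cf * r ^ (p-1)) := by
      rw [← mul_assoc, hcp]; ring
    rw [e3]; linarith
  have hHle := mono_aux hHd hH'pos
  intro r hr
  have hb' : b ∈ Set.Icc a b := Set.right_mem_Icc.mpr hab.le
  have h := hHle r hr
  have hFr : F r ≤ Real.exp (φ r) * F r :=
    le_mul_of_one_le_left (hF r hr) (hexpge r hr)
  have hFb : Real.exp (φ b) * F b ≤ Real.exp (2*C₁) * F b :=
    mul_le_mul_of_nonneg_right (hexple b hb') (hF b hb')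
  simp only [hHdef] at h
  calc F r ≤ Real.exp (φ r) * F r := hFr
    _ = (Real.exp (φ r) * F r + c * r ^ p) - c * r ^ p := by ring
    _ ≤ (Real.exp (φ b) * F b + c * b ^ p) - c * r ^ p := by linarith
    _ = Real.exp (φ b) * F b + c * (b ^ p - r ^ p) := by ring
    _ ≤ Real.exp (2*C₁) * F b + c * (b ^ p - r ^ p) := by linarith



noncomputable def DPair (C₁ C₂ ζ γ : ℝ) : ℕ → ℝ × ℝ
  | 0 => (Real.exp (2*C₁) * ζ + Real.exp (2*C₁), Real.exp (2*C₁) * ζ + Real.exp (2*C₁))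
  | (K+1) =>
      let s := (DPair C₁ C₂ ζ γ K).2
      let d := Real.exp (2*C₁) * ζ + Real.exp (2*C₁) * C₂ * s / (2*γ*(K+1))
      (d, s + d)

noncomputable def Dconst (C₁ C₂ ζ γ : ℝ) (K : ℕ) : ℝ := (DPair C₁ C₂ ζ γ K).1

lemma DPair_pos (C₁ C₂ ζ γ : ℝ) (hC₂ : 0 < C₂) (hζ : 0 < ζ) (hγ : 0 < γ) (K : ℕ) :
    0 < (DPair C₁ C₂ ζ γ K).1 ∧ 0 < (DPair C₁ C₂ ζ γ K).2 := by
  induction K with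
  | zero => constructor <;> · simp [DPair]; positivity
  | succ K ih =>
    have h1 : (0:ℝ) < Real.exp (2*C₁) * ζ + Real.exp (2*C₁) * C₂ *
        (DPair C₁ C₂ ζ γ K).2 / (2*γ*(K+1)) := by
      have := ih.2
      have hK : (0:ℝ) < 2*γ*(K+1) := by positivity
      positivity
    constructor
    · simpa [DPair] using h1
    · have := ih.2
      simp only [DPair]
      linarith
lemma Dconst_sum (C₁ C₂ ζ γ : ℝ) (K : ℕ) :
    ∑ k ∈ Finset.range (K+1), Dconst C₁ C₂ ζ γ k = (DPair C₁ C₂ ζ γ K).2 := by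
  induction K with
  | zero => simp [Dconst, DPair]
  | succ K ih =>
    rw [Finset.sum_range_succ, ih]
    simp only [DPair, Dconst]


/-- Energy hierarchy via Grönwall: under the stated differential
inequalities for the weighted energies r^{2A}·E_K and the initial bound
r₀^{2A}·Σ_k E_k(r₀) ≤ ζ, one has r^{2A}·E_K(r) ≤ D_K·r^{-2γK} on [r_b, r₀], where
D_K depends only on C₁, C₂, A, ζ, K and γ. -/
theorem stmt_10 (N : ℕ) (A C₁ C₂ ζ γ : ℝ)
    (hA : 0 < A) (hC₁ : 0 < C₁) (hC₂ : 0 < C₂) (hζ : 0 < ζ)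
    (hγ : 0 < γ) (hγ' : γ < 1/100) :
    ∃ D : ℕ → ℝ, (∀ K, 0 < D K) ∧
      ∀ (r_b r₀ : ℝ) (E E' : ℕ → ℝ → ℝ),
        0 < r_b → r_b < r₀ → r₀ ≤ 1 →
        (∀ K ≤ N, ∀ r ∈ Set.Icc r_b r₀, 0 ≤ E K r) →
        (∀ K ≤ N, ∀ r ∈ Set.Icc r_b r₀,
          HasDerivAt (fun s => s ^ (2*A) * E K s) (E' K r) r) →
        (∀ K ≤ N, ∀ r ∈ Set.Icc r_b r₀, ContinuousAt (E' K) r) →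
        (∀ K, 1 ≤ K → K ≤ N → ∀ r ∈ Set.Icc r_b r₀,
          r * E' K r ≥ -C₁ * r ^ (1 - γ) * (r ^ (2*A) * E K r)
            - C₂ * ∑ k ∈ Finset.range K,
                r ^ (-2*γ*((K : ℝ) - (k : ℝ))) * (r ^ (2*A) * E k r)) →
        (∀ r ∈ Set.Icc r_b r₀,
          r * E' 0 r ≥ -C₁ * r ^ (1 - γ) * (r ^ (2*A) * E 0 r) - A * r ^ (2*A)) →
        (r₀ ^ (2*A) * ∑ k ∈ Finset.range (N+1), E k r₀ ≤ ζ) →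
        ∀ K ≤ N, ∀ r ∈ Set.Icc r_b r₀,
          r ^ (2*A) * E K r ≤ D K * r ^ (-2*γ*(K : ℝ)) := by
  refine ⟨Dconst C₁ C₂ ζ γ, fun K => (DPair_pos C₁ C₂ ζ γ hC₂ hζ hγ K).1, ?_⟩
  intro r_b r₀ E E' hrb hrr hr1 hE hd _hcont hineq hineq0 hinit
  have hγhalf : γ < 1/2 := by linarith
  have hr₀pos : 0 < r₀ := hrb.trans hrr
  have hr₀mem : r₀ ∈ Set.Icc r_b r₀ := Set.right_mem_Icc.mpr hrr.le
  have hexp1 : 1 ≤ Real.exp (2*C₁) := Real.one_le_exp (by linarith)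
  have hFb : ∀ K ≤ N, r₀ ^ (2*A) * E K r₀ ≤ ζ := by
    intro K hK
    have hterm : E K r₀ ≤ ∑ k ∈ Finset.range (N+1), E k r₀ :=
      Finset.single_le_sum
        (fun k hk => hE k (Nat.lt_succ_iff.mp (Finset.mem_range.mp hk)) r₀ hr₀mem)
        (Finset.mem_range.mpr (Nat.lt_succ_of_le hK))
    calc r₀ ^ (2*A) * E K r₀
        ≤ r₀ ^ (2*A) * ∑ k ∈ Finset.range (N+1), E k r₀ :=
          mul_le_mul_of_nonneg_left hterm (Real.rpow_nonneg hr₀pos.le _)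
      _ ≤ ζ := hinit
  intro K
  induction K using Nat.strong_induction_on with
  | _ K IH =>
  intro hKN r hrmem
  have hFnn : ∀ s ∈ Set.Icc r_b r₀, 0 ≤ s ^ (2*A) * E K s := fun s hs =>
    mul_nonneg (Real.rpow_nonneg (hrb.trans_le hs.1).le _) (hE K hKN s hs)
  match K, hKN, IH with
  | 0, hKN, IH =>
    have hcon := gronwall_aux C₁ γ A (2*A) r_b r₀ (fun s => s ^ (2*A) * E 0 s) (E' 0)
      hC₁ hγ hγhalf hA.le (by positivity) hrb hrr hr1 hFnn (hd 0 hKN)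
      (fun s hs => by have := hineq0 s hs; simpa using this) r hrmem
    have hD0 : Dconst C₁ C₂ ζ γ 0 = Real.exp (2*C₁) * ζ + Real.exp (2*C₁) := by
      simp [Dconst, DPair]
    have hrp : r ^ (-2*γ*((0:ℕ):ℝ)) = 1 := by
      norm_num
    rw [hD0, hrp, mul_one]
    have h1 : r₀ ^ (2*A) ≤ 1 := Real.rpow_le_one hr₀pos.le hr1 (by positivity)
    have h2 : (0:ℝ) ≤ r ^ (2*A) := Real.rpow_nonneg (hrb.trans_le hrmem.1).le _
    have h3 : Real.exp (2*C₁) * A / (2*A) = Real.exp (2*C₁) / 2 := by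
      field_simp
    have h4 := hFb 0 hKN
    rw [h3] at hcon
    nlinarith [Real.exp_pos (2*C₁)]
  | (J+1), hKN, IH =>
    set K := J + 1 with hKdef
    set S : ℝ := ∑ k ∈ Finset.range K, Dconst C₁ C₂ ζ γ k with hSdef
    have hSpos : 0 < S := by
      rw [hSdef, hKdef, Dconst_sum]
      exact (DPair_pos C₁ C₂ ζ γ hC₂ hζ hγ J).2
    have hKR : (1:ℝ) ≤ (K:ℝ) := by exact_mod_cast Nat.one_le_iff_ne_zero.mpr (by simp [hKdef])
    have hppos : (0:ℝ) < 2*γ*(K:ℝ) := by positivity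
    have hpne : (-2*γ*(K:ℝ)) ≠ 0 := by nlinarith
    have hineqK : ∀ s ∈ Set.Icc r_b r₀,
        -C₁ * s ^ (1-γ) * (s ^ (2*A) * E K s) - (C₂*S) * s ^ (-2*γ*(K:ℝ))
          ≤ s * E' K s := by
      intro s hs
      have hspos : 0 < s := hrb.trans_le hs.1
      have h := hineq K (le_refl 1 |>.trans (Nat.one_le_iff_ne_zero.mpr (by simp [hKdef])))
        hKN s hs
      have hsum : ∑ k ∈ Finset.range K, s ^ (-2*γ*((K:ℝ)-(k:ℝ))) * (s ^ (2*A) * E k s)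
          ≤ S * s ^ (-2*γ*(K:ℝ)) := by
        rw [hSdef, Finset.sum_mul]
        apply Finset.sum_le_sum
        intro k hk
        have hkK : k < K := Finset.mem_range.mp hk
        have hIH := IH k hkK (hkK.le.trans hKN) s hs
        calc s ^ (-2*γ*((K:ℝ)-(k:ℝ))) * (s ^ (2*A) * E k s)
            ≤ s ^ (-2*γ*((K:ℝ)-(k:ℝ))) * (Dconst C₁ C₂ ζ γ k * s ^ (-2*γ*(k:ℝ))) :=
              mul_le_mul_of_nonneg_left hIH (Real.rpow_nonneg hspos.le _)
          _ = Dconst C₁ C₂ ζ γ k * (s ^ (-2*γ*((K:ℝ)-(k:ℝ))) * s ^ (-2*γ*(k:ℝ))) := by ring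
          _ = Dconst C₁ C₂ ζ γ k * s ^ (-2*γ*(K:ℝ)) := by
              rw [← Real.rpow_add hspos]
              congr 2
              ring
      have hmul : C₂ * ∑ k ∈ Finset.range K, s ^ (-2*γ*((K:ℝ)-(k:ℝ))) * (s ^ (2*A) * E k s)
          ≤ C₂ * S * s ^ (-2*γ*(K:ℝ)) := by
        rw [mul_assoc]
        exact mul_le_mul_of_nonneg_left hsum hC₂.le
      linarith [h]
    have hcon := gronwall_aux C₁ γ (C₂*S) (-2*γ*(K:ℝ)) r_b r₀
      (fun s => s ^ (2*A) * E K s) (E' K)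
      hC₁ hγ hγhalf (by positivity) hpne hrb hrr hr1 hFnn (hd K hKN) hineqK r hrmem
    -- now conclude
    have hrpos : 0 < r := hrb.trans_le hrmem.1
    have hrp1 : (1:ℝ) ≤ r ^ (-2*γ*(K:ℝ)) :=
      Real.one_le_rpow_of_pos_of_le_one_of_nonpos hrpos (hrmem.2.trans hr1) (by nlinarith)
    have hrp0 : (0:ℝ) < r₀ ^ (-2*γ*(K:ℝ)) := Real.rpow_pos_of_pos hr₀pos _
    have hDK : Dconst C₁ C₂ ζ γ K =
        Real.exp (2*C₁) * ζ + Real.exp (2*C₁) * C₂ * S / (2*γ*(K:ℝ)) := by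
      rw [hSdef, hKdef, Dconst_sum]
      simp only [Dconst, DPair]
      push_cast
      ring_nf
    have hcoef : Real.exp (2*C₁) * (C₂*S) / (-2*γ*(K:ℝ)) *
        (r₀ ^ (-2*γ*(K:ℝ)) - r ^ (-2*γ*(K:ℝ)))
        = Real.exp (2*C₁) * C₂ * S / (2*γ*(K:ℝ)) *
          (r ^ (-2*γ*(K:ℝ)) - r₀ ^ (-2*γ*(K:ℝ))) := by
      field_simp
      ring
    rw [hcoef] at hcon
    rw [hDK]
    have hcpos : 0 < Real.exp (2*C₁) * C₂ * S / (2*γ*(K:ℝ)) := by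
      have := Real.exp_pos (2*C₁); positivity
    have hFbK := hFb K hKN
    have hexpζ : Real.exp (2*C₁) * (r₀ ^ (2*A) * E K r₀) ≤ Real.exp (2*C₁) * ζ :=
      mul_le_mul_of_nonneg_left hFbK (Real.exp_nonneg _)
    have hζnn : (0:ℝ) ≤ Real.exp (2*C₁) * ζ := by positivity
    nlinarith [hcon, mul_le_mul_of_nonneg_left hrp1 hζnn,
      mul_le_mul_of_nonneg_left hrp0.le hcpos.le]
end

section
/- Grönwall with a logarithmically large kernel: let y : [r_b, r₀] → ℝ_{≥0} be continuous satisfying y(r) ≤ D₁·r₀^{-γ} + ∫_r^{r₀} h(s)·y(s)·ds/s where h ≥ 0 satisfies ∫_r^{r₀} h(s)·ds/s ≤ γ·log(r₀/r) + D₂ for all r ∈ [r_b, r₀]. Then y(r) ≤ D₁·e^{D₂}·r^{-γ} for all r ∈ [r_b, r₀]. -/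
open MeasureTheory

set_option maxHeartbeats 1000000

open Set intervalIntegral

lemma gronwall_aux_s13 (a b A : ℝ) (hab : a ≤ b) (hA : 0 ≤ A)
    (g y : ℝ → ℝ)
    (hy_cont : ContinuousOn y (Set.Icc a b))
    (hy_nn : ∀ t ∈ Set.Icc a b, 0 ≤ y t)
    (hg_nn : ∀ t ∈ Set.Icc a b, 0 ≤ g t)
    (hg_int : IntervalIntegrable g volume a b)
    (hgy_int : IntervalIntegrable (fun s => g s * y s) volume a b)
    (hmain : ∀ t ∈ Set.Icc a b, y t ≤ A + ∫ s in t..b, g s * y s) :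
    ∀ r ∈ Set.Icc a b, y r ≤ A * Real.exp (∫ s in r..b, g s) := by
  intro r hr
  obtain ⟨har, hrb⟩ := hr
  -- integrability on subintervals
  have hsubI : ∀ c d : ℝ, c ∈ Icc a b → d ∈ Icc a b →
      IntervalIntegrable g volume c d ∧ IntervalIntegrable (fun s => g s * y s) volume c d := by
    intro c d hc hd
    have hsub : Set.uIcc c d ⊆ Set.uIcc a b := by
      rw [Set.uIcc_of_le hab]
      exact Set.uIcc_subset_Icc hc hd
    exact ⟨hg_int.mono_set hsub, hgy_int.mono_set hsub⟩
  -- the key estimate for every ε ∈ (0,1)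
  have key : ∀ ε : ℝ, ε ∈ Set.Ioo (0:ℝ) 1 →
      y r ≤ A * Real.exp ((1 - ε)⁻¹ * ∫ s in r..b, g s) := by
    intro ε hε
    obtain ⟨hε0, hε1⟩ := hε
    set lam : ℝ := (1 - ε)⁻¹ with hlamdef
    have hεlt : (1:ℝ) - ε > 0 := by linarith
    have hlam0 : 0 < lam := by positivity
    have hlam : lam * (1 - ε) = 1 := inv_mul_cancel₀ (by linarith)
    -- uniform continuity of the primitive
    have hgInt' : IntegrableOn g (Set.uIcc a b) volume := by
      rw [Set.uIcc_of_le hab]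
      exact (intervalIntegrable_iff_integrableOn_Icc_of_le hab).mp hg_int
    have hFcont : ContinuousOn (fun x => ∫ u in a..x, g u) (Set.uIcc a b) :=
      continuousOn_primitive_interval hgInt'
    have huc := (isCompact_uIcc).uniformContinuousOn_of_continuous hFcont
    rw [Metric.uniformContinuousOn_iff] at huc
    obtain ⟨δ, hδ0, hδ⟩ := huc ε hε0
    -- the partition
    set n : ℕ := ⌈(b - r) / δ⌉₊ + 1 with hn
    have hn0 : 0 < (n:ℝ) := by positivity
    set d : ℝ := (b - r) / n with hd
    have hbr : 0 ≤ b - r := by linarith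
    have hd0 : 0 ≤ d := by positivity
    have hdlt : d < δ := by
      rw [hd, div_lt_iff₀ hn0]
      have h1 : (b - r) / δ ≤ (⌈(b - r) / δ⌉₊ : ℝ) := Nat.le_ceil _
      have h2 : (b - r) ≤ (⌈(b - r) / δ⌉₊ : ℝ) * δ := by
        rw [div_le_iff₀ hδ0] at h1; linarith
      have h3 : ((⌈(b - r) / δ⌉₊ : ℝ)) * δ < (n : ℝ) * δ := by
        apply mul_lt_mul_of_pos_right _ hδ0
        rw [hn]; push_cast; linarith
      linarith
    set p : ℕ → ℝ := fun i => r + i * d with hp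
    have hpmono : ∀ i j : ℕ, i ≤ j → p i ≤ p j := by
      intro i j hij
      simp only [hp]
      have := mul_le_mul_of_nonneg_right ((Nat.cast_le (α := ℝ)).mpr hij) hd0
      linarith
    have hpn : p n = b := by
      rw [hp, hd]
      field_simp
      ring
    have hpr : ∀ i : ℕ, r ≤ p i := by
      intro i; rw [hp]; have : 0 ≤ (i:ℝ) * d := by positivity
      simp only []; linarith
    have hmem : ∀ i : ℕ, i ≤ n → p i ∈ Set.Icc a b := by
      intro i hi
      exact ⟨le_trans har (hpr i), by rw [← hpn]; exact hpmono i n hi⟩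
    have hstepd : ∀ i : ℕ, p (i+1) - p i = d := by
      intro i; rw [hp]; push_cast; ring
    -- the kernel masses on the pieces
    set m : ℕ → ℝ := fun i => ∫ u in p i..p (i+1), g u with hmdef
    have hm_nn : ∀ i : ℕ, i + 1 ≤ n → 0 ≤ m i := by
      intro i hi
      apply intervalIntegral.integral_nonneg (hpmono i (i+1) (Nat.le_succ i))
      intro u hu
      exact hg_nn u (Set.Icc_subset_Icc (hmem i (by omega)).1 (hmem (i+1) hi).2 hu)
    have hm_lt : ∀ i : ℕ, i + 1 ≤ n → m i < ε := by
      intro i hi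
      have hiu : p i ∈ Set.uIcc a b := by rw [Set.uIcc_of_le hab]; exact hmem i (by omega)
      have hi1u : p (i+1) ∈ Set.uIcc a b := by rw [Set.uIcc_of_le hab]; exact hmem (i+1) hi
      have hdist : dist (p (i+1)) (p i) < δ := by
        rw [Real.dist_eq, hstepd i, abs_of_nonneg hd0]; exact hdlt
      have hFd := hδ (p (i+1)) hi1u (p i) hiu hdist
      have hadd : (∫ u in a..p i, g u) + ∫ u in p i..p (i+1), g u = ∫ u in a..p (i+1), g u :=
        integral_add_adjacent_intervals (hsubI a (p i) ⟨le_refl a, hab⟩ (hmem i (by omega))).1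
          (hsubI (p i) (p (i+1)) (hmem i (by omega)) (hmem (i+1) hi)).1
      have : m i = (∫ u in a..p (i+1), g u) - ∫ u in a..p i, g u := by
        rw [hmdef]; linarith
      rw [Real.dist_eq] at hFd
      calc m i ≤ |m i| := le_abs_self _
        _ = |(∫ u in a..p (i+1), g u) - ∫ u in a..p i, g u| := by rw [this]
        _ < ε := hFd
    -- the tail kernel integrals
    set H : ℝ → ℝ := fun t => ∫ u in t..b, g u with hHdef
    have hH_add : ∀ i : ℕ, i + 1 ≤ n → m i + H (p (i+1)) = H (p i) := by
      intro i hi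
      exact integral_add_adjacent_intervals
        (hsubI (p i) (p (i+1)) (hmem i (by omega)) (hmem (i+1) hi)).1
        (hsubI (p (i+1)) b (hmem (i+1) hi) ⟨hab, le_refl b⟩).1
    -- the discrete Gronwall factors
    set Q : ℕ → ℝ := fun k =>
      Nat.rec (motive := fun _ => ℝ) 1 (fun k' Qk => Qk / (1 - m (n - k' - 1))) k with hQdef
    have hQ0 : Q 0 = 1 := rfl
    have hQsucc : ∀ k : ℕ, Q (k+1) = Q k / (1 - m (n - k - 1)) := fun k => rfl
    have hQ1 : ∀ k : ℕ, k ≤ n → 1 ≤ Q k := by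
      intro k
      induction k with
      | zero => intro _; rw [hQ0]
      | succ k ih =>
        intro hk
        have hk' : k ≤ n := by omega
        have hi1 : (n - k - 1) + 1 ≤ n := by omega
        have h1 := hm_nn _ hi1
        have h2 := hm_lt _ hi1
        have hpos : 0 < 1 - m (n - k - 1) := by linarith
        rw [hQsucc, le_div_iff₀ hpos]
        nlinarith [ih hk']
    have hQmono : ∀ k : ℕ, k + 1 ≤ n → Q k ≤ Q (k + 1) := by
      intro k hk
      have hi1 : (n - k - 1) + 1 ≤ n := by omega
      have h1 := hm_nn _ hi1
      have h2 := hm_lt _ hi1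
      have hpos : 0 < 1 - m (n - k - 1) := by linarith
      rw [hQsucc, le_div_iff₀ hpos]
      nlinarith [hQ1 k (by omega)]
    have hQexp : ∀ k : ℕ, k ≤ n → Q k ≤ Real.exp (lam * H (p (n - k))) := by
      intro k
      induction k with
      | zero =>
        intro _
        rw [hQ0, Nat.sub_zero, hpn]
        have : H b = 0 := integral_same
        rw [this, mul_zero, Real.exp_zero]
      | succ k ih =>
        intro hk
        have hk' : k ≤ n := by omega
        have hieq2 : n - k = (n - k - 1) + 1 := by omega
        have hi1 : (n - k - 1) + 1 ≤ n := by omega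
        have h1 := hm_nn _ hi1
        have h2 := hm_lt _ hi1
        have hpos : 0 < 1 - m (n - k - 1) := by linarith
        have e1 : Q k ≤ Real.exp (lam * H (p ((n - k - 1) + 1))) := by
          have := ih hk'; rwa [hieq2] at this
        have key1 : 1 ≤ Real.exp (lam * m (n - k - 1)) * (1 - m (n - k - 1)) := by
          nlinarith [Real.add_one_le_exp (lam * m (n - k - 1)),
            mul_nonneg (mul_nonneg hlam0.le h1) (by linarith : (0:ℝ) ≤ ε - m (n - k - 1))]
        have hieq3 : n - (k + 1) = n - k - 1 := by omega
        rw [hQsucc, hieq3]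
        calc Q k / (1 - m (n - k - 1))
            ≤ Real.exp (lam * H (p ((n - k - 1) + 1))) / (1 - m (n - k - 1)) :=
              by gcongr
          _ ≤ Real.exp (lam * H (p ((n - k - 1) + 1))) * Real.exp (lam * m (n - k - 1)) := by
              rw [div_le_iff₀ hpos]
              have h3 := mul_le_mul_of_nonneg_left key1
                (Real.exp_pos (lam * H (p ((n - k - 1) + 1)))).le
              nlinarith [h3]
          _ = Real.exp (lam * H (p (n - k - 1))) := by
              rw [← Real.exp_add, ← hH_add _ hi1]; ring_nf
    -- the main downward induction
    have hC : ∀ k : ℕ, k ≤ n →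
        (∫ u in (p (n - k))..b, g u * y u) ≤ A * (Q k - 1) ∧
        ∀ t ∈ Set.Icc (p (n - k)) b, y t ≤ A * Q k := by
      intro k
      induction k with
      | zero =>
        intro _
        rw [Nat.sub_zero, hpn, hQ0]
        constructor
        · rw [integral_same]; norm_num
        · intro t ht
          have htb : t = b := le_antisymm ht.2 ht.1
          have h2 := hmain b ⟨hab, le_refl b⟩
          rw [integral_same] at h2
          rw [htb]
          linarith
      | succ k ih =>
        intro hk1
        have hk : k ≤ n := by omega
        obtain ⟨ihI, ihY⟩ := ih hk
        have hieq2 : n - k = (n - k - 1) + 1 := by omega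
        rw [hieq2] at ihI ihY
        have hieq3 : n - (k + 1) = n - k - 1 := by omega
        have hi1 : (n - k - 1) + 1 ≤ n := by omega
        have hmi0 := hm_nn _ hi1
        have hmiε := hm_lt _ hi1
        have hpos : 0 < 1 - m (n - k - 1) := by linarith
        have hQk1 := hQ1 k hk
        have hpii : p (n - k - 1) ≤ p ((n - k - 1) + 1) := hpmono _ _ (Nat.le_succ _)
        have hsub_i : Set.Icc (p (n - k - 1)) (p ((n - k - 1) + 1)) ⊆ Set.Icc a b :=
          Set.Icc_subset_Icc (hmem _ (by omega)).1 (hmem _ hi1).2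
        obtain ⟨t₀, ht₀mem, ht₀max⟩ := (isCompact_Icc).exists_isMaxOn
          (Set.nonempty_Icc.mpr hpii) (hy_cont.mono hsub_i)
        have ht₀max' : ∀ u ∈ Set.Icc (p (n - k - 1)) (p ((n - k - 1) + 1)), y u ≤ y t₀ :=
          fun u hu => ht₀max hu
        have ht₀ab : t₀ ∈ Set.Icc a b := hsub_i ht₀mem
        -- bound on the piece
        have hpiece : (∫ u in p (n - k - 1)..p ((n - k - 1) + 1), g u * y u) ≤ m (n - k - 1) * y t₀ := by
          have hle : ∀ u ∈ Set.Icc (p (n - k - 1)) (p ((n - k - 1) + 1)), g u * y u ≤ g u * y t₀ :=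
            fun u hu => mul_le_mul_of_nonneg_left (ht₀max' u hu) (hg_nn u (hsub_i hu))
          calc (∫ u in p (n - k - 1)..p ((n - k - 1) + 1), g u * y u)
              ≤ ∫ u in p (n - k - 1)..p ((n - k - 1) + 1), g u * y t₀ :=
                intervalIntegral.integral_mono_on hpii
                  (hsubI _ _ (hmem _ (by omega)) (hmem _ hi1)).2
                  ((hsubI _ _ (hmem _ (by omega)) (hmem _ hi1)).1.mul_const (y t₀)) hle
            _ = m (n - k - 1) * y t₀ := intervalIntegral.integral_mul_const _ _
        have hsplit : (∫ u in p (n - k - 1)..b, g u * y u) =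
            (∫ u in p (n - k - 1)..p ((n - k - 1) + 1), g u * y u) +
            ∫ u in p ((n - k - 1) + 1)..b, g u * y u :=
          (integral_add_adjacent_intervals
            (hsubI _ _ (hmem _ (by omega)) (hmem _ hi1)).2
            (hsubI _ _ (hmem _ hi1) ⟨hab, le_refl b⟩).2).symm
        have htail : (∫ u in t₀..b, g u * y u) ≤ ∫ u in p (n - k - 1)..b, g u * y u := by
          have hnn : 0 ≤ ∫ u in p (n - k - 1)..t₀, g u * y u := by
            apply intervalIntegral.integral_nonneg ht₀mem.1
            intro u hu
            have hu' : u ∈ Set.Icc a b :=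
              Set.Icc_subset_Icc (hmem (n - k - 1) (by omega)).1 ht₀ab.2 hu
            exact mul_nonneg (hg_nn u hu') (hy_nn u hu')
          have hadd : (∫ u in p (n - k - 1)..t₀, g u * y u) + (∫ u in t₀..b, g u * y u)
              = ∫ u in p (n - k - 1)..b, g u * y u :=
            integral_add_adjacent_intervals
              (hsubI (p (n - k - 1)) t₀ (hmem (n - k - 1) (by omega)) ht₀ab).2
              (hsubI t₀ b ht₀ab ⟨hab, le_refl b⟩).2
          linarith
        have hMb : y t₀ ≤ A + ∫ u in t₀..b, g u * y u := hmain t₀ ht₀ab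
        have hIb : (∫ u in p (n - k - 1)..b, g u * y u) ≤ m (n - k - 1) * y t₀ + A * (Q k - 1) := by
          rw [hsplit]; linarith
        have hMQ : y t₀ ≤ A * Q (k + 1) := by
          have h1 : y t₀ * (1 - m (n - k - 1)) ≤ A * Q k := by nlinarith
          rw [hQsucc, ← mul_div_assoc, le_div_iff₀ hpos]
          exact h1
        have hQrel : Q (k + 1) * (1 - m (n - k - 1)) = Q k := by
          rw [hQsucc]; field_simp
        constructor
        · rw [hieq3]
          calc (∫ u in p (n - k - 1)..b, g u * y u)
              ≤ m (n - k - 1) * y t₀ + A * (Q k - 1) := hIb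
            _ ≤ m (n - k - 1) * (A * Q (k + 1)) + A * (Q k - 1) := by nlinarith
            _ = A * (Q (k + 1) - 1) := by linear_combination (-A) * hQrel
        · intro t ht
          rw [hieq3] at ht
          rcases le_total t (p ((n - k - 1) + 1)) with h | h
          · exact le_trans (ht₀max' t ⟨ht.1, h⟩) hMQ
          · calc y t ≤ A * Q k := ihY t ⟨h, ht.2⟩
              _ ≤ A * Q (k + 1) := mul_le_mul_of_nonneg_left (hQmono k (by omega)) hA
        -- end succ
    obtain ⟨-, hfin⟩ := hC n (le_refl n)
    have hp0 : p 0 = r := by rw [hp]; norm_num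
    have hnn : n - n = 0 := Nat.sub_self n
    rw [hnn, hp0] at hfin
    have h1 : y r ≤ A * Q n := hfin r ⟨le_refl r, hrb⟩
    have h2 := hQexp n (le_refl n)
    rw [hnn, hp0] at h2
    calc y r ≤ A * Q n := h1
      _ ≤ A * Real.exp (lam * H r) := mul_le_mul_of_nonneg_left h2 hA
      _ = A * Real.exp ((1 - ε)⁻¹ * ∫ s in r..b, g s) := by rw [hHdef]
  -- pass to the limit ε → 0⁺
  have htend : Filter.Tendsto (fun ε : ℝ => A * Real.exp ((1 - ε)⁻¹ * ∫ s in r..b, g s))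
      (nhdsWithin 0 (Set.Ioi 0)) (nhds (A * Real.exp (∫ s in r..b, g s))) := by
    have hc : ContinuousAt (fun ε : ℝ => A * Real.exp ((1 - ε)⁻¹ * ∫ s in r..b, g s)) 0 := by
      apply ContinuousAt.mul continuousAt_const
      apply Real.continuous_exp.continuousAt.comp
      apply ContinuousAt.mul _ continuousAt_const
      exact ((continuousAt_const.sub continuousAt_id).inv₀ (by norm_num))
    have h2 := hc.tendsto.mono_left (nhdsWithin_le_nhds (s := Set.Ioi (0:ℝ)))
    simpa using h2
  refine ge_of_tendsto htend ?_
  filter_upwards [Ioo_mem_nhdsGT_of_mem (Set.left_mem_Ico.mpr one_pos)] with ε hε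
  exact key ε hε

/-- Grönwall with a logarithmically large kernel: if
y(r) ≤ D₁·r₀^{-γ} + ∫_r^{r₀} h(s)·y(s) ds/s with h ≥ 0 and
∫_r^{r₀} h(s) ds/s ≤ γ·log(r₀/r) + D₂, then y(r) ≤ D₁·e^{D₂}·r^{-γ}. -/
theorem stmt_13 (r_b r₀ γ D₁ D₂ : ℝ) (hrb : 0 < r_b) (hrr : r_b < r₀)
    (hγ : 0 < γ) (hD₁ : 0 ≤ D₁) (hD₂ : 0 ≤ D₂)
    (y h : ℝ → ℝ)
    (hy_cont : ContinuousOn y (Set.Icc r_b r₀))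
    (hy_nn : ∀ r ∈ Set.Icc r_b r₀, 0 ≤ y r)
    (hh_nn : ∀ r ∈ Set.Icc r_b r₀, 0 ≤ h r)
    (hint1 : IntervalIntegrable (fun s => h s / s) volume r_b r₀)
    (hint2 : IntervalIntegrable (fun s => h s * y s / s) volume r_b r₀)
    (hmain : ∀ r ∈ Set.Icc r_b r₀,
      y r ≤ D₁ * r₀ ^ (-γ) + ∫ s in r..r₀, h s * y s / s)
    (hker : ∀ r ∈ Set.Icc r_b r₀,
      (∫ s in r..r₀, h s / s) ≤ γ * Real.log (r₀ / r) + D₂) :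
    ∀ r ∈ Set.Icc r_b r₀, y r ≤ D₁ * Real.exp D₂ * r ^ (-γ) := by
  have hr₀ : 0 < r₀ := lt_trans hrb hrr
  have hfun : (fun s : ℝ => (fun u : ℝ => h u / u) s * y s) = fun s => h s * y s / s := by
    funext s
    ring
  have hA : 0 ≤ D₁ * r₀ ^ (-γ) := mul_nonneg hD₁ (Real.rpow_nonneg hr₀.le _)
  have hG := gronwall_aux_s13 r_b r₀ (D₁ * r₀ ^ (-γ)) hrr.le hA (fun s => h s / s) y
    hy_cont hy_nn
    (fun t ht => div_nonneg (hh_nn t ht) (le_trans hrb.le ht.1))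
    hint1 (by rw [hfun]; exact hint2)
    (by
      intro t ht
      have := hmain t ht
      calc y t ≤ D₁ * r₀ ^ (-γ) + ∫ s in t..r₀, h s * y s / s := this
        _ = D₁ * r₀ ^ (-γ) + ∫ s in t..r₀, (fun u : ℝ => h u / u) s * y s := by rw [hfun]
      )
  intro r hr
  have h1 := hG r hr
  have h2 : Real.exp (∫ s in r..r₀, h s / s) ≤ Real.exp (γ * Real.log (r₀ / r) + D₂) :=
    Real.exp_le_exp.mpr (hker r hr)
  have hrpos : 0 < r := lt_of_lt_of_le hrb hr.1
  have h3 : y r ≤ D₁ * r₀ ^ (-γ) * Real.exp (γ * Real.log (r₀ / r) + D₂) :=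
    le_trans h1 (mul_le_mul_of_nonneg_left h2 hA)
  have hexp : Real.exp (γ * Real.log (r₀ / r) + D₂) = (r₀ / r) ^ γ * Real.exp D₂ := by
    rw [Real.exp_add]
    congr 1
    rw [Real.rpow_def_of_pos (div_pos hr₀ hrpos), mul_comm]
  have hfin : D₁ * r₀ ^ (-γ) * ((r₀ / r) ^ γ * Real.exp D₂) = D₁ * Real.exp D₂ * r ^ (-γ) := by
    rw [Real.div_rpow hr₀.le hrpos.le, Real.rpow_neg hr₀.le, Real.rpow_neg hrpos.le]
    field_simp
  rw [hexp, hfin] at h3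
  exact h3
end

section
/- Constraint propagation: if C₁, C₂ : [r_b, r₀] × S¹ → ℝ are C¹ solutions of the linear hyperbolic system r·∂_r C₁ = r·a·∂ₓC₂ + f·C₁ and r·∂_r C₂ = r·a·∂ₓC₁ + g·C₂, where a, f, g are continuous bounded functions, and the energy E(r) = (1/2)∫_{S¹}(C₁² + C₂²)dx vanishes at r = r₀, then C₁ ≡ C₂ ≡ 0 on [r_b, r₀] × S¹. (This follows since |r·dE/dr| ≤ C·E(r) for some constant C, via integration by parts on the circle.) -/
/-- Constraint propagation: C¹ solutions (C₁, C₂) of the linear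
hyperbolic system r·∂_r C₁ = r·a·∂ₓC₂ + f·C₁, r·∂_r C₂ = r·a·∂ₓC₁ + g·C₂ on
[r_b, r₀] × S¹ (with a, f, g continuous and bounded, a C¹ in x with bounded ∂ₓa)
whose energy E(r) = ½∫(C₁² + C₂²)dx vanishes at r = r₀ vanish identically. -/
theorem stmt_14 (r_b r₀ : ℝ) (hrb : 0 < r_b) (hrr : r_b < r₀)
    (C₁ C₂ a f g drC₁ dxC₁ drC₂ dxC₂ dxa : ℝ → ℝ → ℝ)
    (hC₁cont : Continuous (Function.uncurry C₁))
    (hC₂cont : Continuous (Function.uncurry C₂))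
    (hdxC₁cont : Continuous (Function.uncurry dxC₁))
    (hdxC₂cont : Continuous (Function.uncurry dxC₂))
    (hdrC₁cont : Continuous (Function.uncurry drC₁))
    (hdrC₂cont : Continuous (Function.uncurry drC₂))
    (hacont : Continuous (Function.uncurry a))
    (hfcont : Continuous (Function.uncurry f))
    (hgcont : Continuous (Function.uncurry g))
    (hper₁ : ∀ r, Function.Periodic (C₁ r) (2 * Real.pi))
    (hper₂ : ∀ r, Function.Periodic (C₂ r) (2 * Real.pi))
    (hpera : ∀ r, Function.Periodic (a r) (2 * Real.pi))
    (hr₁ : ∀ r ∈ Set.Icc r_b r₀, ∀ x, HasDerivAt (fun s => C₁ s x) (drC₁ r x) r)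
    (hx₁ : ∀ r ∈ Set.Icc r_b r₀, ∀ x, HasDerivAt (fun y => C₁ r y) (dxC₁ r x) x)
    (hr₂ : ∀ r ∈ Set.Icc r_b r₀, ∀ x, HasDerivAt (fun s => C₂ s x) (drC₂ r x) r)
    (hx₂ : ∀ r ∈ Set.Icc r_b r₀, ∀ x, HasDerivAt (fun y => C₂ r y) (dxC₂ r x) x)
    (hxa : ∀ r ∈ Set.Icc r_b r₀, ∀ x, HasDerivAt (fun y => a r y) (dxa r x) x)
    (ha_bd : ∃ Ma, ∀ r ∈ Set.Icc r_b r₀, ∀ x, |a r x| ≤ Ma)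
    (hdxa_bd : ∃ Ma', ∀ r ∈ Set.Icc r_b r₀, ∀ x, |dxa r x| ≤ Ma')
    (hf_bd : ∃ Mf, ∀ r ∈ Set.Icc r_b r₀, ∀ x, |f r x| ≤ Mf)
    (hg_bd : ∃ Mg, ∀ r ∈ Set.Icc r_b r₀, ∀ x, |g r x| ≤ Mg)
    (hsys₁ : ∀ r ∈ Set.Icc r_b r₀, ∀ x,
      r * drC₁ r x = r * a r x * dxC₂ r x + f r x * C₁ r x)
    (hsys₂ : ∀ r ∈ Set.Icc r_b r₀, ∀ x,
      r * drC₂ r x = r * a r x * dxC₁ r x + g r x * C₂ r x)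
    (hE0 : (1/2) * ∫ x in (0:ℝ)..(2 * Real.pi),
      ((C₁ r₀ x)^2 + (C₂ r₀ x)^2) = 0) :
    ∀ r ∈ Set.Icc r_b r₀, ∀ x, C₁ r x = 0 ∧ C₂ r x = 0 := by

  classical
  obtain ⟨Ma', hMa'⟩ := hdxa_bd
  obtain ⟨Mf, hMf⟩ := hf_bd
  obtain ⟨Mg, hMg⟩ := hg_bd
  have hrbI : r_b ∈ Set.Icc r_b r₀ := ⟨le_refl _, hrr.le⟩
  have hMa'0 : 0 ≤ Ma' := le_trans (abs_nonneg _) (hMa' r_b hrbI 0)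
  have hMf0 : 0 ≤ Mf := le_trans (abs_nonneg _) (hMf r_b hrbI 0)
  have hMg0 : 0 ≤ Mg := le_trans (abs_nonneg _) (hMg r_b hrbI 0)
  set K : ℝ := Ma' + 2 * Mf / r_b + 2 * Mg / r_b with hKdef
  have hK0 : 0 ≤ K := by positivity
  have h2pi : (0:ℝ) ≤ 2 * Real.pi := by positivity
  set F : ℝ → ℝ → ℝ := fun r x => (C₁ r x) ^ 2 + (C₂ r x) ^ 2 with hFdef
  set G : ℝ → ℝ → ℝ := fun r x =>
    2 * (C₁ r x * drC₁ r x + C₂ r x * drC₂ r x) with hGdef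
  set E : ℝ → ℝ := fun r => ∫ x in (0:ℝ)..(2 * Real.pi), F r x with hEdef
  have hFcont : Continuous (Function.uncurry F) := by
    have : Function.uncurry F =
        fun p : ℝ × ℝ => (Function.uncurry C₁ p) ^ 2 + (Function.uncurry C₂ p) ^ 2 := rfl
    rw [this]; exact (hC₁cont.pow 2).add (hC₂cont.pow 2)
  have hGcont : Continuous (Function.uncurry G) := by
    have : Function.uncurry G = fun p : ℝ × ℝ =>
        2 * (Function.uncurry C₁ p * Function.uncurry drC₁ p +
          Function.uncurry C₂ p * Function.uncurry drC₂ p) := rfl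
    rw [this]
    exact continuous_const.mul ((hC₁cont.mul hdrC₁cont).add (hC₂cont.mul hdrC₂cont))
  have hFrcont : ∀ r, Continuous (F r) := fun r =>
    hFcont.comp (Continuous.prodMk_right r)
  have hGrcont : ∀ r, Continuous (G r) := fun r =>
    hGcont.comp (Continuous.prodMk_right r)
  have hC₁r : ∀ r, Continuous (C₁ r) := fun r => hC₁cont.comp (Continuous.prodMk_right r)
  have hC₂r : ∀ r, Continuous (C₂ r) := fun r => hC₂cont.comp (Continuous.prodMk_right r)
  have har : ∀ r, Continuous (a r) := fun r => hacont.comp (Continuous.prodMk_right r)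
  have hfr : ∀ r, Continuous (f r) := fun r => hfcont.comp (Continuous.prodMk_right r)
  have hgr : ∀ r, Continuous (g r) := fun r => hgcont.comp (Continuous.prodMk_right r)
  have hdxC₁r : ∀ r, Continuous (dxC₁ r) := fun r => hdxC₁cont.comp (Continuous.prodMk_right r)
  have hdxC₂r : ∀ r, Continuous (dxC₂ r) := fun r => hdxC₂cont.comp (Continuous.prodMk_right r)
  have hEcont : Continuous E :=
    intervalIntegral.continuous_parametric_intervalIntegral_of_continuous' hFcont _ _
  have hEnn : ∀ r, 0 ≤ E r := fun r =>
    intervalIntegral.integral_nonneg h2pi (fun x _ => by positivity)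
  -- uniform bound for G on the compact rectangle
  obtain ⟨M, hM⟩ := ((isCompact_Icc (a := r_b) (b := r₀)).prod
      (isCompact_Icc (a := (0:ℝ)) (b := 2 * Real.pi))).exists_bound_of_continuousOn
      hGcont.continuousOn
  -- derivative of E in the interior
  have hEderiv : ∀ r ∈ Set.Ioo r_b r₀,
      HasDerivAt E (∫ x in (0:ℝ)..(2 * Real.pi), G r x) r := by
    intro r hr
    have hε : 0 < min (r - r_b) (r₀ - r) := lt_min (by linarith [hr.1]) (by linarith [hr.2])
    have hball : Metric.ball r (min (r - r_b) (r₀ - r)) ⊆ Set.Icc r_b r₀ := by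
      intro s hs
      rw [Metric.mem_ball, Real.dist_eq] at hs
      have h1 := abs_lt.mp hs
      constructor
      · have := min_le_left (r - r_b) (r₀ - r); linarith [h1.1]
      · have := min_le_right (r - r_b) (r₀ - r); linarith [h1.2]
    have hIsub : Set.uIoc (0:ℝ) (2 * Real.pi) ⊆ Set.Icc 0 (2 * Real.pi) := by
      rw [Set.uIoc_of_le h2pi]; exact Set.Ioc_subset_Icc_self
    refine (intervalIntegral.hasDerivAt_integral_of_dominated_loc_of_deriv_le (Metric.ball_mem_nhds r hε)
      (Filter.Eventually.of_forall fun s => ((hFrcont s).aestronglyMeasurable).restrict)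
      ((hFrcont r).intervalIntegrable _ _)
      ((hGrcont r).aestronglyMeasurable).restrict
      (MeasureTheory.ae_of_all _ fun x hx s hs => hM (s, x) ⟨hball hs, hIsub hx⟩)
      (intervalIntegrable_const)
      (MeasureTheory.ae_of_all _ fun x hx s hs => ?_)).2
    have h1 := (hr₁ s (hball hs) x).pow 2
    have h2 := (hr₂ s (hball hs) x).pow 2
    have := h1.add h2
    refine this.congr_deriv ?_
    simp [hGdef]
    ring
  -- integral inequality: |E'(r)| ≤ K * E r
  have hkey : ∀ r ∈ Set.Ioo r_b r₀,
      |∫ x in (0:ℝ)..(2 * Real.pi), G r x| ≤ K * E r := by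
    intro r hr
    have hrI : r ∈ Set.Icc r_b r₀ := Set.Ioo_subset_Icc_self hr
    have hrpos : 0 < r := lt_trans hrb hr.1
    set D : ℝ → ℝ := fun x => dxa r x * (C₁ r x * C₂ r x) +
      a r x * (dxC₁ r x * C₂ r x + C₁ r x * dxC₂ r x) with hDdef
    set H : ℝ → ℝ := fun x => -2 * dxa r x * (C₁ r x * C₂ r x) +
      (2 * f r x / r) * (C₁ r x) ^ 2 + (2 * g r x / r) * (C₂ r x) ^ 2 with hHdef
    have hPderiv : ∀ x, HasDerivAt (fun y => a r y * C₁ r y * C₂ r y) (D x) x := by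
      intro x
      have := ((hxa r hrI x).mul (hx₁ r hrI x)).mul (hx₂ r hrI x)
      refine this.congr_deriv ?_
      simp [hDdef]; ring
    have hdxa_meas : Measurable (dxa r) := by
      have : dxa r = deriv (a r) := funext fun x => ((hxa r hrI x).deriv).symm
      rw [this]; exact measurable_deriv _
    have hdxa_mul_int : ∀ (φ : ℝ → ℝ), Continuous φ →
        IntervalIntegrable (fun x => dxa r x * φ x) MeasureTheory.volume 0 (2 * Real.pi) := by
      intro φ hφ
      obtain ⟨Cφ, hCφ⟩ := (isCompact_Icc (a := (0:ℝ)) (b := 2 * Real.pi)).exists_bound_of_continuousOn hφ.continuousOn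
      rw [intervalIntegrable_iff]
      have hconst : MeasureTheory.IntegrableOn (fun _ : ℝ => Ma' * Cφ)
          (Set.uIoc 0 (2 * Real.pi)) MeasureTheory.volume := by
        apply MeasureTheory.integrableOn_const
        rw [Set.uIoc_of_le h2pi]
        exact measure_Ioc_lt_top.ne
        exact enorm_ne_top
      apply MeasureTheory.Integrable.mono' hconst
        ((hdxa_meas.mul hφ.measurable).aestronglyMeasurable)
      refine Filter.Eventually.mono (MeasureTheory.ae_restrict_mem measurableSet_uIoc) ?_
      intro x hx
      have hx' : x ∈ Set.Icc 0 (2 * Real.pi) := by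
        rw [Set.uIoc_of_le h2pi] at hx; exact Set.Ioc_subset_Icc_self hx
      have h1 : |dxa r x| ≤ Ma' := hMa' r hrI x
      have h2 : |φ x| ≤ Cφ := by simpa [Real.norm_eq_abs] using hCφ x hx'
      calc ‖dxa r x * φ x‖ = |dxa r x| * |φ x| := by
            rw [Real.norm_eq_abs, abs_mul]
        _ ≤ Ma' * Cφ := mul_le_mul h1 h2 (abs_nonneg _) hMa'0
    have hD_int : IntervalIntegrable D MeasureTheory.volume 0 (2 * Real.pi) := by
      apply IntervalIntegrable.add
      · exact hdxa_mul_int _ ((hC₁r r).mul (hC₂r r))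
      · exact ((har r).mul (((hdxC₁r r).mul (hC₂r r)).add
          ((hC₁r r).mul (hdxC₂r r)))).intervalIntegrable _ _
    have hH_int : IntervalIntegrable H MeasureTheory.volume 0 (2 * Real.pi) := by
      apply IntervalIntegrable.add
      apply IntervalIntegrable.add
      · have h := hdxa_mul_int (fun x => -2 * (C₁ r x * C₂ r x))
          (continuous_const.mul ((hC₁r r).mul (hC₂r r)))
        have heq : (fun x => -2 * dxa r x * (C₁ r x * C₂ r x))
            = fun x => dxa r x * (-2 * (C₁ r x * C₂ r x)) := by
          funext x; ring
        rw [heq]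
        exact h
      · exact ((continuous_const.mul (hfr r)).div_const r |>.mul ((hC₁r r).pow 2)).intervalIntegrable _ _
      · exact ((continuous_const.mul (hgr r)).div_const r |>.mul ((hC₂r r).pow 2)).intervalIntegrable _ _
    have hIBP : ∫ x in (0:ℝ)..(2 * Real.pi), D x = 0 := by
      rw [intervalIntegral.integral_eq_sub_of_hasDerivAt (fun x _ => hPderiv x) hD_int]
      have e1 : a r (2 * Real.pi) = a r 0 := by simpa using hpera r 0
      have e2 : C₁ r (2 * Real.pi) = C₁ r 0 := by simpa using hper₁ r 0
      have e3 : C₂ r (2 * Real.pi) = C₂ r 0 := by simpa using hper₂ r 0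
      rw [e1, e2, e3]; ring
    have hGD : ∀ x, G r x = 2 * D x + H x := by
      intro x
      have e₁ := hsys₁ r hrI x
      have e₂ := hsys₂ r hrI x
      have hr0 : r ≠ 0 := ne_of_gt hrpos
      have : r * G r x = r * (2 * D x + H x) := by
        simp only [hGdef, hDdef, hHdef]
        field_simp
        linear_combination (C₁ r x) * e₁ + (C₂ r x) * e₂
      exact mul_left_cancel₀ hr0 this
    have hsplit : ∫ x in (0:ℝ)..(2 * Real.pi), G r x
        = ∫ x in (0:ℝ)..(2 * Real.pi), H x := by
      have : ∫ x in (0:ℝ)..(2 * Real.pi), G r x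
          = ∫ x in (0:ℝ)..(2 * Real.pi), (2 * D x + H x) := by
        apply intervalIntegral.integral_congr
        intro x _
        exact hGD x
      rw [this, intervalIntegral.integral_add (hD_int.const_mul 2) hH_int,
        intervalIntegral.integral_const_mul, hIBP]
      ring
    rw [hsplit]
    have hptbd : ∀ x, |H x| ≤ K * F r x := by
      intro x
      set u := C₁ r x
      set v := C₂ r x
      have hd := abs_le.mp (hMa' r hrI x)
      have hfb := abs_le.mp (hMf r hrI x)
      have hgb := abs_le.mp (hMg r hrI x)
      have hfd : f r x / r ≤ Mf / r_b := div_le_div₀ hMf0 hfb.2 hrb hrI.1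
      have hfd' : -(Mf / r_b) ≤ f r x / r := by
        have : (-(f r x)) / r ≤ Mf / r_b := div_le_div₀ hMf0 (by linarith [hfb.1]) hrb hrI.1
        rw [neg_div] at this; linarith
      have hgd : g r x / r ≤ Mg / r_b := div_le_div₀ hMg0 hgb.2 hrb hrI.1
      have hgd' : -(Mg / r_b) ≤ g r x / r := by
        have : (-(g r x)) / r ≤ Mg / r_b := div_le_div₀ hMg0 (by linarith [hgb.1]) hrb hrI.1
        rw [neg_div] at this; linarith
      have hu2 : (0:ℝ) ≤ u ^ 2 := sq_nonneg u
      have hv2 : (0:ℝ) ≤ v ^ 2 := sq_nonneg v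
      have q1 : 0 ≤ (Ma' - dxa r x) * (u + v) ^ 2 :=
        mul_nonneg (by linarith [hd.2]) (sq_nonneg _)
      have q2 : 0 ≤ (Ma' + dxa r x) * (u - v) ^ 2 :=
        mul_nonneg (by linarith [hd.1]) (sq_nonneg _)
      have q3 : 0 ≤ (Ma' - dxa r x) * (u - v) ^ 2 :=
        mul_nonneg (by linarith [hd.2]) (sq_nonneg _)
      have q4 : 0 ≤ (Ma' + dxa r x) * (u + v) ^ 2 :=
        mul_nonneg (by linarith [hd.1]) (sq_nonneg _)
      have m1 : (f r x / r) * u ^ 2 ≤ (Mf / r_b) * u ^ 2 :=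
        mul_le_mul_of_nonneg_right hfd hu2
      have m2 : -((Mf / r_b) * u ^ 2) ≤ (f r x / r) * u ^ 2 := by
        have := mul_le_mul_of_nonneg_right hfd' hu2
        rw [neg_mul] at this; linarith
      have m3 : (g r x / r) * v ^ 2 ≤ (Mg / r_b) * v ^ 2 :=
        mul_le_mul_of_nonneg_right hgd hv2
      have m4 : -((Mg / r_b) * v ^ 2) ≤ (g r x / r) * v ^ 2 := by
        have := mul_le_mul_of_nonneg_right hgd' hv2
        rw [neg_mul] at this; linarith
      have e1lo : -2 * dxa r x * (u * v) ≥ -(Ma' * (u ^ 2 + v ^ 2)) := by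
        have hexp : (Ma' + dxa r x) * (u + v) ^ 2 + (Ma' - dxa r x) * (u - v) ^ 2
            = 2 * (Ma' * (u ^ 2 + v ^ 2) + 2 * dxa r x * (u * v)) := by ring
        linarith [q4, q3]
      have e1hi : -2 * dxa r x * (u * v) ≤ Ma' * (u ^ 2 + v ^ 2) := by
        have hexp : (Ma' - dxa r x) * (u + v) ^ 2 + (Ma' + dxa r x) * (u - v) ^ 2
            = 2 * (Ma' * (u ^ 2 + v ^ 2) - 2 * dxa r x * (u * v)) := by ring
        linarith [q1, q2]
      have hextra1 : 0 ≤ (Mf / r_b) * v ^ 2 := mul_nonneg (div_nonneg hMf0 hrb.le) hv2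
      have hextra2 : 0 ≤ (Mg / r_b) * u ^ 2 := mul_nonneg (div_nonneg hMg0 hrb.le) hu2
      have expandK : (Ma' + 2 * Mf / r_b + 2 * Mg / r_b) * (u ^ 2 + v ^ 2)
          = Ma' * (u ^ 2 + v ^ 2) + 2 * ((Mf / r_b) * u ^ 2) + 2 * ((Mf / r_b) * v ^ 2)
            + 2 * ((Mg / r_b) * u ^ 2) + 2 * ((Mg / r_b) * v ^ 2) := by ring
      have eH : H x = -2 * dxa r x * (u * v) + 2 * ((f r x / r) * u ^ 2)
          + 2 * ((g r x / r) * v ^ 2) := by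
        simp only [hHdef]; ring
      have eF : F r x = u ^ 2 + v ^ 2 := rfl
      rw [abs_le, eH, eF, hKdef]
      constructor
      · linarith [e1lo, m2, m4, hextra1, hextra2, expandK]
      · linarith [e1hi, m1, m3, hextra1, hextra2, expandK]
    have hKF_int : IntervalIntegrable (fun x => K * F r x) MeasureTheory.volume 0 (2 * Real.pi) :=
      (continuous_const.mul (hFrcont r)).intervalIntegrable _ _
    have := intervalIntegral.norm_integral_le_of_norm_le
      (f := H) (g := fun x => K * F r x) (μ := MeasureTheory.volume)
      (a := 0) (b := 2 * Real.pi) h2pi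
      (MeasureTheory.ae_of_all _ fun x _ => by
        rw [Real.norm_eq_abs]; exact hptbd x) hKF_int
    rw [Real.norm_eq_abs] at this
    calc |∫ x in (0:ℝ)..(2 * Real.pi), H x|
        ≤ |∫ x in (0:ℝ)..(2 * Real.pi), K * F r x| := this.trans (le_abs_self _)
      _ = K * E r := by
          rw [intervalIntegral.integral_const_mul, hEdef,
            abs_of_nonneg (mul_nonneg hK0 (hEnn r))]
  -- energy at r₀ vanishes
  have hEr₀ : E r₀ = 0 := by
    have : E r₀ = ∫ x in (0:ℝ)..(2 * Real.pi), ((C₁ r₀ x) ^ 2 + (C₂ r₀ x) ^ 2) := rfl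
    rw [this]; linarith [hE0]
  -- Gronwall: energy vanishes everywhere
  have hEzero : ∀ r ∈ Set.Icc r_b r₀, E r = 0 := by
    intro r hrI
    rcases eq_or_lt_of_le hrI.2 with h | h
    · rw [h]; exact hEr₀
    · refine le_antisymm ?_ (hEnn r)
      have key2 : ∀ δ ∈ Set.Ioo (0:ℝ) (r₀ - r),
          E r ≤ E (r₀ - δ) * Real.exp (K * (r₀ - r_b)) := by
        intro δ hδ
        set c := r₀ - δ with hcdef
        have hc1 : r < c := by simp only [hcdef]; linarith [hδ.2]
        have hc2 : c < r₀ := by simp only [hcdef]; linarith [hδ.1]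
        have hgron := norm_le_gronwallBound_of_norm_deriv_right_le
          (f := fun s => E (c - s))
          (f' := fun s => -(∫ x in (0:ℝ)..(2 * Real.pi), G (c - s) x))
          (δ := E c) (K := K) (ε := 0) (a := 0) (b := c - r)
          ((hEcont.comp (continuous_const.sub continuous_id)).continuousOn)
          (fun s hs => by
            have hmem : c - s ∈ Set.Ioo r_b r₀ := by
              constructor
              · have := hs.2; simp only [Set.mem_Ico] at hs
                have : c - s > r := by linarith [hs.2]
                linarith [hrI.1]
              · have := hs.1; simp only [Set.mem_Ico] at hs
                linarith [hs.1, hc2]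
            have hd := hEderiv (c - s) hmem
            have hcomp := hd.comp s ((hasDerivAt_id s).const_sub c)
            have : HasDerivAt (fun s => E (c - s))
                (-(∫ x in (0:ℝ)..(2 * Real.pi), G (c - s) x)) s := by
              refine hcomp.congr_deriv ?_; ring
            exact this.hasDerivWithinAt)
          (by simp [Real.norm_eq_abs, abs_of_nonneg (hEnn c)])
          (fun s hs => by
            have hmem : c - s ∈ Set.Ioo r_b r₀ := by
              simp only [Set.mem_Ico] at hs
              constructor
              · have : c - s > r := by linarith [hs.2]
                linarith [hrI.1]
              · linarith [hs.1, hc2]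
            have := hkey (c - s) hmem
            rw [Real.norm_eq_abs, Real.norm_eq_abs, abs_neg,
              abs_of_nonneg (hEnn (c - s))]
            linarith)
        have hfin := hgron (c - r) ⟨by linarith, le_refl _⟩
        rw [gronwallBound_ε0] at hfin
        have hsimp : c - (c - r) = r := by ring
        have hfin' : E r ≤ E c * Real.exp (K * (c - r - 0)) := by
          simpa [hsimp, Real.norm_eq_abs, abs_of_nonneg (hEnn r)] using hfin
        rw [sub_zero] at hfin'
        calc E r ≤ E c * Real.exp (K * (c - r)) := hfin'
          _ ≤ E c * Real.exp (K * (r₀ - r_b)) := by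
              apply mul_le_mul_of_nonneg_left _ (hEnn c)
              apply Real.exp_le_exp.mpr
              apply mul_le_mul_of_nonneg_left _ hK0
              have := hrI.1; simp only [hcdef]; linarith [hδ.1]
      have hlim : Filter.Tendsto (fun δ => E (r₀ - δ) * Real.exp (K * (r₀ - r_b)))
          (nhdsWithin 0 (Set.Ioi 0)) (nhds 0) := by
        have h1 : Filter.Tendsto (fun δ : ℝ => r₀ - δ) (nhdsWithin 0 (Set.Ioi 0)) (nhds r₀) := by
          have : Filter.Tendsto (fun δ : ℝ => r₀ - δ) (nhds 0) (nhds (r₀ - 0)) :=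
            (continuous_const.sub continuous_id).tendsto 0
          rw [sub_zero] at this
          exact this.mono_left nhdsWithin_le_nhds
        have h2 := (hEcont.tendsto r₀).comp h1
        rw [hEr₀] at h2
        have h3 := h2.mul_const (Real.exp (K * (r₀ - r_b)))
        rw [zero_mul] at h3
        exact h3
      refine ge_of_tendsto hlim ?_
      refine Filter.eventually_of_mem (Ioo_mem_nhdsGT (sub_pos.mpr h)) ?_
      intro δ hδ
      exact key2 δ hδ
  -- pointwise vanishing
  have hFzero : ∀ r ∈ Set.Icc r_b r₀, ∀ x, F r x = 0 := by
    intro r hrI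
    have hae : (fun x => F r x) =ᵐ[MeasureTheory.volume.restrict (Set.Ioc 0 (2 * Real.pi))]
        (0 : ℝ → ℝ) := by
      refine (intervalIntegral.integral_eq_zero_iff_of_le_of_nonneg_ae h2pi
        (MeasureTheory.ae_of_all _ fun x => ?_) ((hFrcont r).intervalIntegrable _ _)).mp
        (hEzero r hrI)
      simp only [Pi.zero_apply, hFdef]; positivity
    have heq : Set.EqOn (F r) 0 (Set.Ioc 0 (2 * Real.pi)) :=
      MeasureTheory.Measure.eqOn_Ioc_of_ae_eq MeasureTheory.volume hae
        (hFrcont r).continuousOn continuousOn_const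
    have hperF : Function.Periodic (F r) (2 * Real.pi) := by
      intro x
      simp only [hFdef]
      rw [hper₁ r x, hper₂ r x]
    intro x
    set n := ⌊x / (2 * Real.pi)⌋ with hndef
    have hpi : (0:ℝ) < 2 * Real.pi := by positivity
    have hy1 : 0 ≤ x - n * (2 * Real.pi) := Int.sub_floor_div_mul_nonneg x hpi
    have hy2 : x - n * (2 * Real.pi) < 2 * Real.pi := Int.sub_floor_div_mul_lt x hpi
    have hpx : F r (x - n * (2 * Real.pi)) = F r x := hperF.sub_int_mul_eq n
    rcases eq_or_lt_of_le hy1 with h0 | h0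
    · have h2p : F r (2 * Real.pi) = F r (x - n * (2 * Real.pi)) := by
        rw [← h0]
        have := hperF 0
        rw [zero_add] at this
        exact this
      rw [← hpx, ← h2p]
      exact heq ⟨hpi, le_refl _⟩
    · rw [← hpx]
      exact heq ⟨h0, hy2.le⟩
  intro r hrI x
  have h := hFzero r hrI x
  simp only [hFdef] at h
  constructor
  · nlinarith [sq_nonneg (C₁ r x), sq_nonneg (C₂ r x)]
  · nlinarith [sq_nonneg (C₁ r x), sq_nonneg (C₂ r x)]
end

section
/- Sequential-to-full convergence upgrade: let Q : (0, r₀] → ℝ_{≥0} be C¹ with ∫₀^{r₀} Q(s)/s ds < ∞ and |r·Q'(r)| ≤ C·Q(r) for a constant C. Then Q(r) → 0 as r → 0. -/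
open MeasureTheory Set Filter

/-- Sequential-to-full convergence upgrade: if Q ≥ 0 is C¹ on
(0, r₀] with ∫₀^{r₀} Q(s)/s ds < ∞ and |r·Q'(r)| ≤ C·Q(r), then Q(r) → 0 as
r → 0. -/
theorem stmt_19 (r₀ C : ℝ) (hr₀ : 0 < r₀) (hC : 0 < C)
    (Q Q' : ℝ → ℝ)
    (hQnn : ∀ r ∈ Set.Ioc (0:ℝ) r₀, 0 ≤ Q r)
    (hderiv : ∀ r ∈ Set.Ioc (0:ℝ) r₀, HasDerivAt Q (Q' r) r)
    (hQ'cont : ContinuousOn Q' (Set.Ioc (0:ℝ) r₀))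
    (hint : MeasureTheory.IntegrableOn (fun s => Q s / s) (Set.Ioc 0 r₀))
    (hbd : ∀ r ∈ Set.Ioc (0:ℝ) r₀, |r * Q' r| ≤ C * Q r) :
    Filter.Tendsto Q (nhdsWithin 0 (Set.Ioc 0 r₀)) (nhds 0) := by
  -- Step 1: monotonicity of r ↦ Q r * r ^ C
  have hmono : ∀ r s : ℝ, 0 < r → r ≤ s → s ≤ r₀ → Q r * r ^ C ≤ Q s * s ^ C := by
    intro r s hr hrs hs
    set g : ℝ → ℝ := fun t => Q t * t ^ C with hg
    have key : MonotoneOn g (Set.Icc r s) := by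
      apply monotoneOn_of_deriv_nonneg (convex_Icc r s)
      · intro t ht
        have ht0 : 0 < t := lt_of_lt_of_le hr ht.1
        have htm : t ∈ Set.Ioc (0:ℝ) r₀ := ⟨ht0, le_trans ht.2 hs⟩
        exact ((hderiv t htm).continuousAt.mul
          (Real.continuousAt_rpow_const t C (Or.inl ht0.ne'))).continuousWithinAt
      · intro t ht
        rw [interior_Icc] at ht
        have ht0 : 0 < t := lt_trans hr ht.1
        have htm : t ∈ Set.Ioc (0:ℝ) r₀ := ⟨ht0, le_of_lt (lt_of_lt_of_le ht.2 hs)⟩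
        exact ((hderiv t htm).mul
          (Real.hasDerivAt_rpow_const (Or.inl ht0.ne'))).differentiableAt.differentiableWithinAt
      · intro t ht
        rw [interior_Icc] at ht
        have ht0 : 0 < t := lt_trans hr ht.1
        have htm : t ∈ Set.Ioc (0:ℝ) r₀ := ⟨ht0, le_of_lt (lt_of_lt_of_le ht.2 hs)⟩
        have hd : HasDerivAt g (Q' t * t ^ C + Q t * (C * t ^ (C - 1))) t :=
          (hderiv t htm).mul (Real.hasDerivAt_rpow_const (Or.inl ht0.ne'))
        rw [hd.deriv]
        have h1 : -(C * Q t) ≤ t * Q' t := neg_le_of_abs_le (hbd t htm)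
        have h2 : (0:ℝ) < t ^ (C - 1) := Real.rpow_pos_of_pos ht0 _
        have h3 : t ^ C = t ^ (C - 1) * t := by
          have := Real.rpow_add_one ht0.ne' (C - 1)
          rw [sub_add_cancel] at this
          exact this
        rw [h3]
        nlinarith [mul_le_mul_of_nonneg_left h1 h2.le]
    have := key ⟨le_refl r, hrs⟩ ⟨hrs, le_refl s⟩ hrs
    simpa [hg] using this
  -- Step 2: lower bound for the integral over Ioc r (2r)
  have hlow : ∀ r : ℝ, 0 < r → 2 * r ≤ r₀ →
      Q r * ((1 - 2 ^ (-C)) / C) ≤ ∫ s in Set.Ioc r (2*r), Q s / s := by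
    intro r hr h2r
    have hQr : 0 ≤ Q r := hQnn r ⟨hr, by linarith⟩
    have hle : ∀ s ∈ Set.Ioc r (2*r), Q r * r ^ C * s ^ (-C - 1) ≤ Q s / s := by
      intro s hsm
      have hs0 : 0 < s := lt_trans hr hsm.1
      have h1 : Q r * r ^ C ≤ Q s * s ^ C := hmono r s hr hsm.1.le (le_trans hsm.2 h2r)
      have h2 : s ^ (-C - 1) = (s ^ C)⁻¹ * s⁻¹ := by
        rw [← Real.rpow_neg_one s, ← Real.rpow_neg hs0.le, ← Real.rpow_add hs0]
        ring_nf
      rw [h2, div_eq_mul_inv]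
      have hsC : (0:ℝ) < s ^ C := Real.rpow_pos_of_pos hs0 _
      have := mul_le_mul_of_nonneg_right h1 (by positivity : (0:ℝ) ≤ (s ^ C)⁻¹ * s⁻¹)
      calc Q r * r ^ C * ((s ^ C)⁻¹ * s⁻¹) ≤ Q s * s ^ C * ((s ^ C)⁻¹ * s⁻¹) := this
        _ = Q s * s⁻¹ := by field_simp
    have hint' : IntegrableOn (fun s => Q s / s) (Set.Ioc r (2*r)) :=
      hint.mono_set (fun x hx => ⟨lt_trans hr hx.1, le_trans hx.2 h2r⟩)
    have hintf : IntegrableOn (fun s => Q r * r ^ C * s ^ (-C - 1)) (Set.Ioc r (2*r)) := by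
      apply (ContinuousOn.integrableOn_compact isCompact_Icc ?_).mono_set
        (Set.Ioc_subset_Icc_self (a := r) (b := 2*r))
      exact continuousOn_const.mul (fun s hs =>
        (Real.continuousAt_rpow_const s _ (Or.inl (ne_of_gt (lt_of_lt_of_le hr hs.1)))).continuousWithinAt)
    have hmono' := setIntegral_mono_on hintf hint' measurableSet_Ioc hle
    have hval : ∫ s in Set.Ioc r (2*r), Q r * r ^ C * s ^ (-C - 1) = Q r * ((1 - 2 ^ (-C)) / C) := by
      rw [← intervalIntegral.integral_of_le (by linarith : r ≤ 2*r)]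
      rw [intervalIntegral.integral_const_mul]
      rw [integral_rpow (Or.inr ⟨by intro h; apply hC.ne'; linarith [sub_eq_iff_eq_add.mp h], by
          rw [Set.uIcc_of_le (by linarith : r ≤ 2*r)]
          intro h; exact absurd h.1 (by linarith)⟩)]
      have hne : -C - 1 + 1 = -C := by ring
      rw [hne]
      have h2rC : (2*r) ^ (-C) = 2 ^ (-C) * r ^ (-C) := Real.mul_rpow (by norm_num) hr.le
      have hrr : r ^ C * r ^ (-C) = 1 := by
        rw [← Real.rpow_add hr]; norm_num
      rw [h2rC]
      have hsub : (2 ^ (-C) * r ^ (-C) - r ^ (-C)) / (-C) = r ^ (-C) * ((1 - 2 ^ (-C)) / C) := by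
        rw [div_neg, eq_comm, mul_div_assoc', mul_comm, ← neg_div, neg_sub]
        congr 1
        ring
      calc Q r * r ^ C * ((2 ^ (-C) * r ^ (-C) - r ^ (-C)) / (-C))
          = Q r * ((r ^ C * r ^ (-C)) * ((1 - 2 ^ (-C)) / C)) := by rw [hsub]; ring
        _ = Q r * ((1 - 2 ^ (-C)) / C) := by rw [hrr]; ring
    linarith [hmono', hval.ge, hval.le]
  -- Step 3: squeeze
  set K : ℝ := (1 - 2 ^ (-C)) / C with hKdef
  have h2C : (2:ℝ) ^ (-C) < 1 :=
    Real.rpow_lt_one_of_one_lt_of_neg one_lt_two (by linarith)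
  have hK : 0 < K := div_pos (by linarith) hC
  set μ : Measure ℝ := volume.restrict (Set.Ioc 0 r₀) with hμ
  have hintμ : Integrable (fun s => Q s / s) μ := hint
  have hnnμ : 0 ≤ᵐ[μ] fun s => Q s / s := by
    rw [hμ]
    exact (ae_restrict_iff' measurableSet_Ioc).mpr
      (ae_of_all _ fun x hx => div_nonneg (hQnn x hx) hx.1.le)
  apply squeeze_zero' (g := fun r => (∫ s in Set.Ioc 0 (2*r), Q s / s ∂μ) / K)
  · exact eventually_nhdsWithin_of_forall fun r hr => hQnn r hr
  · have hev : ∀ᶠ r in nhdsWithin 0 (Set.Ioc 0 r₀), r < r₀/2 ∧ r ∈ Set.Ioc (0:ℝ) r₀ :=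
      ((eventually_lt_nhds (by linarith : (0:ℝ) < r₀/2)).filter_mono nhdsWithin_le_nhds).and
        eventually_mem_nhdsWithin
    filter_upwards [hev] with r hrpair
    obtain ⟨hrhalf, hrmem⟩ := hrpair
    have hr : 0 < r := hrmem.1
    have h2r : 2 * r ≤ r₀ := by linarith
    have step1 : Q r * K ≤ ∫ s in Set.Ioc r (2*r), Q s / s := hlow r hr h2r
    have heq : (∫ s in Set.Ioc r (2*r), Q s / s) = ∫ s in Set.Ioc r (2*r), Q s / s ∂μ := by
      have hsub : Set.Ioc r (2*r) ⊆ Set.Ioc (0:ℝ) r₀ :=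
        fun x hx => ⟨lt_trans hr hx.1, le_trans hx.2 h2r⟩
      rw [hμ, Measure.restrict_restrict measurableSet_Ioc, Set.inter_eq_left.mpr hsub]
    have step2 : (∫ s in Set.Ioc r (2*r), Q s / s ∂μ) ≤ ∫ s in Set.Ioc 0 (2*r), Q s / s ∂μ :=
      setIntegral_mono_set hintμ.integrableOn
        (hnnμ.filter_mono (ae_mono Measure.restrict_le_self))
        (HasSubset.Subset.eventuallyLE (Set.Ioc_subset_Ioc_left hr.le))
    rw [le_div_iff₀ hK]
    linarith [heq ▸ step1]
  · have hms : Tendsto (fun r : ℝ => μ (Set.Ioc 0 (2*r))) (nhdsWithin 0 (Set.Ioc 0 r₀)) (nhds 0) := by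
      have hub : ∀ r : ℝ, μ (Set.Ioc 0 (2*r)) ≤ ENNReal.ofReal (2*r) := by
        intro r
        rw [hμ, Measure.restrict_apply measurableSet_Ioc]
        calc volume (Set.Ioc 0 (2*r) ∩ Set.Ioc 0 r₀) ≤ volume (Set.Ioc 0 (2*r)) :=
              measure_mono Set.inter_subset_left
          _ = ENNReal.ofReal (2*r) := by rw [Real.volume_Ioc, sub_zero]
      have hub' : Tendsto (fun r : ℝ => ENNReal.ofReal (2*r)) (nhdsWithin 0 (Set.Ioc 0 r₀)) (nhds 0) := by
        have : Tendsto (fun r : ℝ => 2*r) (nhdsWithin 0 (Set.Ioc 0 r₀)) (nhds 0) := by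
          have := (tendsto_id (x := nhds (0:ℝ))).const_mul 2
          simpa using this.mono_left nhdsWithin_le_nhds
        simpa using ENNReal.tendsto_ofReal this
      exact tendsto_of_tendsto_of_tendsto_of_le_of_le tendsto_const_nhds hub'
        (fun r => zero_le) (fun r => hub r)
    have := (hintμ.tendsto_setIntegral_nhds_zero hms).div_const K
    simpa using this
end
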